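/- arXiv:2211.05513 — 7 statements merged into one kernel-verified Lean document; each statement's English description precedes it below -/
import Mathlib

section
/- Let d ≥ 1 be an integer and set t = ⌈log₂(d+1)⌉. Let m and r be integers with t ≤ r ≤ m. Let D ⊆ F₂^{2^m} be the set of evaluation vectors Eval(x_{m−t+1}·x_{m−t+2}···x_m · g(x₁,…,x_{m−t})), where g ranges over all polynomials in F₂[x₁,…,x_{m−t}] of total degree at most r − t. Then D is an F₂-linear subspace of RM(m,r) of dimension C(m−t, ≤ r−t) = Σ_{i=0}^{r−t} C(m−t, i), and every codeword in D satisfies the (d,∞)-RLL constraint (under the lexicographic coordinate ordering). -/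
/-- The `m`-bit binary representation (MSB first) of the coordinate index `s`,
as an evaluation point in `F₂^m` (lexicographic coordinate ordering). -/
def bitRepr (m : ℕ) (s : ℕ) : Fin m → ZMod 2 :=
  fun j => if Nat.testBit s (m - 1 - (j : ℕ)) then 1 else 0

/-- Evaluation of an `m`-variate polynomial over `F₂` at all points of `F₂^m`,
listed in lexicographic order, as a linear map. -/
noncomputable def evalRM (m : ℕ) :
    MvPolynomial (Fin m) (ZMod 2) →ₗ[ZMod 2] (Fin (2 ^ m) → ZMod 2) :=
  LinearMap.pi fun s => (MvPolynomial.aeval (bitRepr m (s : ℕ))).toLinearMap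

/-- The Reed-Muller code RM(m,r): evaluation vectors of polynomials of total degree ≤ r. -/
noncomputable def RM (m r : ℕ) : Submodule (ZMod 2) (Fin (2 ^ m) → ZMod 2) :=
  (MvPolynomial.restrictTotalDegree (Fin m) (ZMod 2) r).map (evalRM m)

/-- A word `w` satisfies the `(d,∞)`-RLL constraint: any two 1s are separated by at least d 0s. -/
def RLL (d : ℕ) {n : ℕ} (w : Fin n → ZMod 2) : Prop :=
  ∀ i j : Fin n, w i = 1 → (i : ℕ) < (j : ℕ) → (j : ℕ) ≤ (i : ℕ) + d → w j = 0

open MvPolynomial Finset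

namespace Stmt0Aux

/-- indicator finsupp of a finset -/
def ind {m : ℕ} (T : Finset (Fin m)) : Fin m →₀ ℕ :=
  ⟨T, fun i => if i ∈ T then 1 else 0, by intro a; by_cases h : a ∈ T <;> simp [h]⟩

@[simp] lemma ind_apply {m : ℕ} (T : Finset (Fin m)) (i : Fin m) :
    ind T i = if i ∈ T then 1 else 0 := rfl

@[simp] lemma ind_support {m : ℕ} (T : Finset (Fin m)) : (ind T).support = T := rfl

lemma ind_injective {m : ℕ} : Function.Injective (ind (m := m)) := by
  intro a b h
  have := congrArg Finsupp.support h
  simpa using this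

lemma ind_sum {m : ℕ} (T : Finset (Fin m)) : (ind T).sum (fun _ e => e) = T.card := by
  rw [Finsupp.sum]
  rw [ind_support]
  calc (∑ i ∈ T, ind T i) = ∑ i ∈ T, 1 := by
        apply Finset.sum_congr rfl; intro i hi; simp [hi]
    _ = T.card := by simp

lemma prod_X_eq {m : ℕ} (T : Finset (Fin m)) :
    (∏ j ∈ T, X j : MvPolynomial (Fin m) (ZMod 2)) = monomial (ind T) 1 := by
  rw [monomial_eq]
  rw [Finsupp.prod]
  rw [ind_support]
  rw [map_one, one_mul]
  apply Finset.prod_congr rfl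
  intro i hi
  simp [hi]

lemma zmod2_pow (a : ZMod 2) (k : ℕ) (hk : 1 ≤ k) : a ^ k = a := by
  induction k with
  | zero => omega
  | succ n ih =>
    rcases Nat.eq_or_lt_of_le hk with h | h
    · simp [← h]
    · have hn : 1 ≤ n := by omega
      rw [pow_succ, ih hn]
      have h2 : ∀ b : ZMod 2, b * b = b := by decide
      exact h2 a

lemma aeval_pt {m : ℕ} (pt : Fin m → ZMod 2) (p : MvPolynomial (Fin m) (ZMod 2)) :
    aeval pt p = eval pt p := by
  rw [aeval_def, ← coe_eval₂Hom]
  rfl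


/-- multilinear reduction of a single exponent vector -/
def q {m : ℕ} (d : Fin m →₀ ℕ) : Fin m →₀ ℕ := ind d.support

/-- multilinear reduction of a polynomial -/
noncomputable def redP {m : ℕ} (g : MvPolynomial (Fin m) (ZMod 2)) : MvPolynomial (Fin m) (ZMod 2) :=
  ∑ d ∈ g.support, monomial (q d) (coeff d g)

lemma pow_q {m : ℕ} (pt : Fin m → ZMod 2) (d : Fin m →₀ ℕ) (i : Fin m) :
    pt i ^ (q d) i = pt i ^ d i := by
  by_cases h : i ∈ d.support
  · have hd : 1 ≤ d i := by
      have := Finsupp.mem_support_iff.mp h; omega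
    rw [zmod2_pow _ _ hd]
    have : (q d) i = 1 := by simp [q, h]
    rw [this, pow_one]
  · have hd : d i = 0 := by simpa using h
    have : (q d) i = 0 := by simp [q, h]
    rw [this, hd]

lemma eval_redP {m : ℕ} (pt : Fin m → ZMod 2) (g : MvPolynomial (Fin m) (ZMod 2)) :
    eval pt (redP g) = eval pt g := by
  rw [redP, map_sum]
  rw [eval_eq' pt g]
  apply Finset.sum_congr rfl
  intro d _
  rw [eval_monomial]
  congr 1
  rw [Finsupp.prod_fintype]
  · exact Finset.prod_congr rfl fun i _ => pow_q pt d i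
  · intro i; exact pow_zero _

lemma redP_mem_restrictDegree {m : ℕ} (g : MvPolynomial (Fin m) (ZMod 2)) :
    redP g ∈ restrictDegree (Fin m) (ZMod 2) 1 := by
  apply Submodule.sum_mem
  intro d _
  rw [mem_restrictDegree]
  intro s hs i
  have hsub := support_monomial_subset (s := q d) (a := coeff d g) hs
  rw [Finset.mem_singleton] at hsub
  subst hsub
  by_cases h : i ∈ d.support <;> simp [q, h]

lemma redP_totalDegree {m : ℕ} (g : MvPolynomial (Fin m) (ZMod 2)) {k : ℕ}
    (hg : g.totalDegree ≤ k) : (redP g).totalDegree ≤ k := by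
  apply (totalDegree_finset_sum _ _).trans
  apply Finset.sup_le
  intro d hd
  apply (totalDegree_monomial_le _ _).trans
  have h1 : (q d).sum (fun _ e => e) ≤ d.sum (fun _ e => e) := by
    rw [q, ind_sum]
    rw [Finsupp.sum]
    have : ∀ i ∈ d.support, 1 ≤ d i := by
      intro i hi; have := Finsupp.mem_support_iff.mp hi; omega
    calc d.support.card = ∑ _i ∈ d.support, 1 := by simp
      _ ≤ ∑ i ∈ d.support, d i := Finset.sum_le_sum this
  exact h1.trans ((le_totalDegree hd).trans hg)

lemma redP_vars {m : ℕ} (g : MvPolynomial (Fin m) (ZMod 2)) :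
    (redP g).vars ⊆ g.vars := by
  classical
  intro i hi
  have h1 := vars_sum_subset g.support (fun d => monomial (q d) (coeff d g)) hi
  rw [Finset.mem_biUnion] at h1
  obtain ⟨d, hd, hid⟩ := h1
  have h2 : (monomial (q d) (coeff d g)).vars ⊆ (q d).support := by
    by_cases hc : coeff d g = 0
    · simp [hc]
    · rw [vars_monomial hc]
  have h3 : i ∈ (q d).support := h2 hid
  rw [q, ind_support] at h3
  rw [mem_vars]
  exact ⟨d, hd, h3⟩

lemma mul_monomial_decomp {m : ℕ} (p : MvPolynomial (Fin m) (ZMod 2)) (e : Fin m →₀ ℕ) :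
    p * monomial e 1 = ∑ d ∈ p.support, monomial (d + e) (coeff d p) := by
  conv_lhs => rw [p.as_sum, Finset.sum_mul]
  apply Finset.sum_congr rfl
  intro d _
  rw [monomial_mul, mul_one]

lemma bitRepr_bijective (m : ℕ) :
    Function.Bijective (fun s : Fin (2 ^ m) => bitRepr m (s : ℕ)) := by
  rw [Fintype.bijective_iff_injective_and_card]
  constructor
  · intro s1 s2 h
    apply Fin.ext
    apply Nat.eq_of_testBit_eq
    intro k
    by_cases hk : k < m
    · have hjlt : m - 1 - k < m := by omega
      have := congrFun h ⟨m - 1 - k, hjlt⟩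
      simp only [bitRepr] at this
      have hj : m - 1 - (m - 1 - k) = k := by omega
      rw [hj] at this
      by_cases h1 : Nat.testBit (s1 : ℕ) k <;> by_cases h2 : Nat.testBit (s2 : ℕ) k <;>
        simp_all
    · have hle : (2:ℕ) ^ m ≤ 2 ^ k := Nat.pow_le_pow_right (by norm_num) (by omega)
      rw [Nat.testBit_lt_two_pow (lt_of_lt_of_le s1.isLt hle),
        Nat.testBit_lt_two_pow (lt_of_lt_of_le s2.isLt hle)]
  · simp [ZMod.card]

lemma evalRM_apply {m : ℕ} (p : MvPolynomial (Fin m) (ZMod 2)) (s : Fin (2 ^ m)) :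
    evalRM m p s = eval (bitRepr m (s : ℕ)) p := by
  rw [← aeval_pt]
  rfl

lemma eval_zero_of_evalRM_zero {m : ℕ} (p : MvPolynomial (Fin m) (ZMod 2))
    (h : evalRM m p = 0) (v : Fin m → ZMod 2) : eval v p = 0 := by
  obtain ⟨s, hs⟩ := (bitRepr_bijective m).2 v
  have := congrFun h s
  rw [evalRM_apply] at this
  rw [← hs]
  exact this

lemma eq_zero_of_evalRM_zero {m : ℕ} (p : MvPolynomial (Fin m) (ZMod 2))
    (hp : p ∈ restrictDegree (Fin m) (ZMod 2) 1) (h : evalRM m p = 0) : p = 0 := by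
  apply MvPolynomial.eq_zero_of_eval_eq_zero
  · exact fun v => eval_zero_of_evalRM_zero p h v
  · have : Fintype.card (ZMod 2) - 1 = 1 := by rw [ZMod.card]
    rw [this]
    exact hp

def Sset (m t : ℕ) : Finset (Fin m) := univ.filter fun j => (j : ℕ) < m - t
def Fset (m t : ℕ) : Finset (Fin m) := univ.filter fun j => m - t ≤ (j : ℕ)

lemma card_Sset (m t : ℕ) (h : t ≤ m) : (Sset m t).card = m - t := by
  have := Finset.card_bij' (s := Sset m t) (t := (univ : Finset (Fin (m - t))))
    (i := fun a _ => ⟨(a : ℕ), by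
      next ha => simpa [Sset] using ha⟩)
    (j := fun b _ => ⟨(b : ℕ), by omega⟩)
    (fun a ha => Finset.mem_univ _) (fun b hb => by simp [Sset])
    (fun a ha => rfl) (fun b hb => rfl)
  simpa using this

lemma card_Fset (m t : ℕ) (h : t ≤ m) : (Fset m t).card = t := by
  have h1 : Fset m t = univ.filter fun j : Fin m => ¬ ((j : ℕ) < m - t) := by
    apply Finset.filter_congr
    intro j _
    simp [not_lt]
  have h2 := Finset.card_filter_add_card_filter_not
    (s := (univ : Finset (Fin m))) (p := fun j : Fin m => (j : ℕ) < m - t)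
  rw [← Sset, ← h1] at h2
  rw [card_Sset m t h] at h2
  simp only [Finset.card_univ, Fintype.card_fin] at h2
  omega


noncomputable def P (m t r : ℕ) : Submodule (ZMod 2) (MvPolynomial (Fin m) (ZMod 2)) :=
  restrictTotalDegree (Fin m) (ZMod 2) (r - t) ⊓ restrictDegree (Fin m) (ZMod 2) 1 ⊓
    Subalgebra.toSubmodule (supported (ZMod 2) (↑(Sset m t) : Set (Fin m)))

noncomputable def Piprod (m t : ℕ) : MvPolynomial (Fin m) (ZMod 2) := ∏ j ∈ Fset m t, X j

noncomputable def L (m t : ℕ) : MvPolynomial (Fin m) (ZMod 2) →ₗ[ZMod 2] Fin (2 ^ m) → ZMod 2 :=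
  (evalRM m) ∘ₗ LinearMap.mulRight (ZMod 2) (Piprod m t)

lemma L_apply {m t : ℕ} (p : MvPolynomial (Fin m) (ZMod 2)) :
    L m t p = evalRM m (p * Piprod m t) := rfl

lemma mem_P {m t r : ℕ} (p : MvPolynomial (Fin m) (ZMod 2)) :
    p ∈ P m t r ↔ p.totalDegree ≤ r - t ∧ (∀ s ∈ p.support, ∀ i, s i ≤ 1) ∧
      (↑p.vars : Set (Fin m)) ⊆ ↑(Sset m t) := by
  rw [P, Submodule.mem_inf, Submodule.mem_inf, mem_restrictTotalDegree, mem_restrictDegree,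
    Subalgebra.mem_toSubmodule, mem_supported]
  tauto

lemma vars_sub_S {m t r : ℕ} {p : MvPolynomial (Fin m) (ZMod 2)} (hp : p ∈ P m t r)
    {d : Fin m →₀ ℕ} (hd : d ∈ p.support) {i : Fin m} (hi : i ∈ d.support) :
    (i : ℕ) < m - t := by
  have h1 : i ∈ p.vars := (mem_vars i).mpr ⟨d, hd, hi⟩
  have h2 := ((mem_P p).mp hp).2.2 (Finset.mem_coe.mpr h1)
  simpa [Sset] using h2

lemma mul_Pi_mem {m t r : ℕ} (htr : t ≤ r) (hrm : r ≤ m)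
    {p : MvPolynomial (Fin m) (ZMod 2)} (hp : p ∈ P m t r) :
    p * Piprod m t ∈ restrictDegree (Fin m) (ZMod 2) 1 ⊓
      restrictTotalDegree (Fin m) (ZMod 2) r := by
  have htm : t ≤ m := htr.trans hrm
  rw [Piprod, prod_X_eq, mul_monomial_decomp]
  rw [Submodule.mem_inf]
  constructor
  · apply Submodule.sum_mem
    intro d hd
    rw [mem_restrictDegree]
    intro s hs i
    have hsub := support_monomial_subset hs
    rw [Finset.mem_singleton] at hsub
    subst hsub
    by_cases hif : i ∈ Fset m t
    · have hiF : (m - t : ℕ) ≤ (i : ℕ) := by simpa [Fset] using hif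
      have hdi : d i = 0 := by
        by_contra hne
        have : i ∈ d.support := Finsupp.mem_support_iff.mpr hne
        have := vars_sub_S hp hd this
        omega
      simp [hdi, hif]
    · have h1 := ((mem_P p).mp hp).2.1 d hd i
      simp [hif]
      omega
  · apply Submodule.sum_mem
    intro d hd
    rw [mem_restrictTotalDegree]
    apply (totalDegree_monomial_le _ _).trans
    have hadd : (d + ind (Fset m t)).sum (fun _ e => e)
        = d.sum (fun _ e => e) + (ind (Fset m t)).sum (fun _ e => e) :=
      Finsupp.sum_add_index' (fun _ => rfl) (fun _ _ _ => rfl)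
    simp only [Function.id_def]
    rw [hadd, ind_sum, card_Fset m t htm]
    have h1 : d.sum (fun _ e => e) ≤ r - t :=
      (le_totalDegree hd).trans ((mem_P p).mp hp).1
    omega

lemma Piprod_ne_zero (m t : ℕ) : Piprod m t ≠ 0 := by
  rw [Piprod, prod_X_eq]
  simp [monomial_eq_zero]

lemma L_inj_on_P {m t r : ℕ} (htr : t ≤ r) (hrm : r ≤ m)
    {p : MvPolynomial (Fin m) (ZMod 2)} (hp : p ∈ P m t r) (h0 : L m t p = 0) : p = 0 := by
  have hmem := (Submodule.mem_inf.mp (mul_Pi_mem htr hrm hp)).1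
  have hz : p * Piprod m t = 0 := eq_zero_of_evalRM_zero _ hmem (by rw [← L_apply]; exact h0)
  rcases mul_eq_zero.mp hz with h | h
  · exact h
  · exact absurd h (Piprod_ne_zero m t)


def Tfam (m t r : ℕ) : Finset (Finset (Fin m)) :=
  (Sset m t).powerset.filter fun T => T.card ≤ r - t

noncomputable def bfam (m t r : ℕ) : {T // T ∈ Tfam m t r} → MvPolynomial (Fin m) (ZMod 2) :=
  fun T => monomial (ind T.1) 1

lemma bfam_mem_P {m t r : ℕ} (T : {T // T ∈ Tfam m t r}) : bfam m t r T ∈ P m t r := by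
  obtain ⟨hsub, hcard⟩ := Finset.mem_filter.mp T.2
  rw [Finset.mem_powerset] at hsub
  rw [bfam, mem_P]
  refine ⟨?_, ?_, ?_⟩
  · apply (totalDegree_monomial_le _ _).trans
    simp only [Function.id_def]
    rw [ind_sum]
    exact hcard
  · intro s hs i
    have hsub' := support_monomial_subset hs
    rw [Finset.mem_singleton] at hsub'
    subst hsub'
    by_cases h : i ∈ T.1 <;> simp [h]
  · rw [vars_monomial (one_ne_zero' (ZMod 2)), ind_support]
    exact fun i hi => Finset.mem_coe.mpr (hsub (Finset.mem_coe.mp hi))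

lemma P_eq_span (m t r : ℕ) :
    P m t r = Submodule.span (ZMod 2) (Set.range (bfam m t r)) := by
  apply le_antisymm
  · intro p hp
    rw [← p.support_sum_monomial_coeff]
    apply Submodule.sum_mem
    intro d hd
    have hd1 : ∀ i, d i ≤ 1 := fun i => ((mem_P p).mp hp).2.1 d hd i
    have hdind : d = ind d.support := by
      ext i
      by_cases h : i ∈ d.support
      · have h1 : 1 ≤ d i := by
          have := Finsupp.mem_support_iff.mp h; omega
        have h2 := hd1 i
        simp [h]
        omega
      · have : d i = 0 := by simpa using h
        simp [h, this]
    have hTmem : d.support ∈ Tfam m t r := by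
      rw [Tfam, Finset.mem_filter, Finset.mem_powerset]
      constructor
      · intro i hi
        have := vars_sub_S hp hd hi
        simp [Sset, this]
      · have hsum : d.support.card ≤ d.sum (fun _ e => e) := by
          rw [Finsupp.sum]
          calc d.support.card = ∑ _i ∈ d.support, 1 := by simp
            _ ≤ ∑ i ∈ d.support, d i := Finset.sum_le_sum fun i hi => by
                have := Finsupp.mem_support_iff.mp hi; omega
        exact hsum.trans ((le_totalDegree hd).trans ((mem_P p).mp hp).1)
    have : monomial d (coeff d p) = coeff d p • bfam m t r ⟨d.support, hTmem⟩ := by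
      rw [bfam, smul_monomial, ← hdind, smul_eq_mul, mul_one]
    rw [this]
    exact Submodule.smul_mem _ _ (Submodule.subset_span ⟨⟨d.support, hTmem⟩, rfl⟩)
  · rw [Submodule.span_le]
    rintro _ ⟨T, rfl⟩
    exact bfam_mem_P T

lemma bfam_linearIndependent (m t r : ℕ) :
    LinearIndependent (ZMod 2) (bfam m t r) := by
  have h := (basisMonomials (Fin m) (ZMod 2)).linearIndependent
  have h2 : bfam m t r = (basisMonomials (Fin m) (ZMod 2)) ∘ (fun T : {T // T ∈ Tfam m t r} => ind T.1) := by
    funext T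
    rw [Function.comp_apply, coe_basisMonomials]
    rfl
  rw [h2]
  exact h.comp _ (ind_injective.comp Subtype.val_injective)

lemma card_Tfam {m t r : ℕ} (htm : t ≤ m) :
    (Tfam m t r).card = ∑ i ∈ Finset.range (r - t + 1), (m - t).choose i := by
  have hU : Tfam m t r = (Finset.range (r - t + 1)).biUnion
      (fun i => (Sset m t).powersetCard i) := by
    ext T
    simp only [Tfam, Finset.mem_filter, Finset.mem_powerset, Finset.mem_biUnion,
      Finset.mem_range, Finset.mem_powersetCard, Nat.lt_succ_iff]
    constructor
    · rintro ⟨h1, h2⟩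
      exact ⟨T.card, h2, h1, rfl⟩
    · rintro ⟨i, hi, h1, rfl⟩
      exact ⟨h1, hi⟩
  rw [hU, Finset.card_biUnion]
  · apply Finset.sum_congr rfl
    intro i _
    rw [Finset.card_powersetCard, card_Sset m t htm]
  · intro i _ j _ hij
    show Disjoint (Finset.powersetCard i (Sset m t)) (Finset.powersetCard j (Sset m t))
    rw [Finset.disjoint_left]
    intro T hTi hTj
    rw [Finset.mem_powersetCard] at hTi hTj
    exact hij (hTi.2 ▸ hTj.2)

lemma finrank_P {m t r : ℕ} (htm : t ≤ m) :
    Module.finrank (ZMod 2) (P m t r) = ∑ i ∈ Finset.range (r - t + 1), (m - t).choose i := by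
  rw [P_eq_span]
  rw [finrank_span_eq_card (bfam_linearIndependent m t r)]
  rw [Fintype.card_coe]
  exact card_Tfam htm

instance fdP (m t r : ℕ) : FiniteDimensional (ZMod 2) (P m t r) := by
  rw [P_eq_span]
  exact FiniteDimensional.span_of_finite _ (Set.finite_range _)

lemma finrank_D {m t r : ℕ} (htr : t ≤ r) (hrm : r ≤ m) :
    Module.finrank (ZMod 2) ((P m t r).map (L m t))
      = ∑ i ∈ Finset.range (r - t + 1), (m - t).choose i := by
  have htm : t ≤ m := htr.trans hrm
  set f : P m t r →ₗ[ZMod 2] (Fin (2 ^ m) → ZMod 2) := (L m t).comp (P m t r).subtype with hf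
  have hinj : Function.Injective f := by
    rw [← LinearMap.ker_eq_bot]
    rw [Submodule.eq_bot_iff]
    intro x hx
    rw [LinearMap.mem_ker] at hx
    have := L_inj_on_P htr hrm x.2 hx
    exact Subtype.ext this
  have hrange : LinearMap.range f = (P m t r).map (L m t) := by
    rw [hf, LinearMap.range_comp, Submodule.range_subtype]
  rw [← hrange, LinearMap.finrank_range_of_inj hinj, finrank_P htm]


lemma key_bits {d t m : ℕ} (hd : 1 ≤ d) (ht : t = Nat.clog 2 (d + 1)) (htm : t ≤ m)
    {c : Fin (2 ^ m) → ZMod 2} {p : MvPolynomial (Fin m) (ZMod 2)} (hc : c = L m t p)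
    (s : Fin (2 ^ m)) (hs : c s = 1) : ((s : ℕ)) % 2 ^ t = 2 ^ t - 1 := by
  have ht1 : 1 ≤ t := by
    rw [ht]
    exact Nat.clog_pos one_lt_two (by omega)
  have key : ∀ k, k < t → Nat.testBit (s : ℕ) k = true := by
    intro k hk
    have hcs : c s = eval (bitRepr m (s : ℕ)) p * ∏ j' ∈ Fset m t, bitRepr m (s : ℕ) j' := by
      rw [hc, L_apply, evalRM_apply, map_mul, Piprod, map_prod]
      simp [eval_X]
    have hprod : (∏ j' ∈ Fset m t, bitRepr m (s : ℕ) j') ≠ 0 := by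
      intro h0
      rw [hcs, h0, mul_zero] at hs
      exact one_ne_zero hs.symm
    rw [Finset.prod_ne_zero_iff] at hprod
    have hjlt : m - 1 - k < m := by omega
    have hjF : (⟨m - 1 - k, hjlt⟩ : Fin m) ∈ Fset m t := by
      simp only [Fset, Finset.mem_filter, Finset.mem_univ, true_and]
      omega
    have hne := hprod _ hjF
    simp only [bitRepr] at hne
    have harith : m - 1 - (m - 1 - k) = k := by omega
    rw [harith] at hne
    by_cases hb : Nat.testBit (s : ℕ) k
    · exact hb
    · simp [hb] at hne
  apply Nat.eq_of_testBit_eq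
  intro k
  rw [Nat.testBit_mod_two_pow, Nat.testBit_two_pow_sub_one]
  by_cases hk : k < t
  · simp [hk, key k hk]
  · simp [hk]

lemma rll_of_mem {d t m : ℕ} (hd : 1 ≤ d) (ht : t = Nat.clog 2 (d + 1)) (htm : t ≤ m)
    {c : Fin (2 ^ m) → ZMod 2} {p : MvPolynomial (Fin m) (ZMod 2)} (hc : c = L m t p) :
    RLL d c := by
  intro i j hi hij hjd
  by_contra hj0
  have hj1 : c j = 1 := by
    have h2 : ∀ a : ZMod 2, a = 0 ∨ a = 1 := by decide
    rcases h2 (c j) with h | h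
    · exact absurd h hj0
    · exact h
  have h1 := key_bits hd ht htm hc i hi
  have h2 := key_bits hd ht htm hc j hj1
  have hmodeq : (i : ℕ) ≡ (j : ℕ) [MOD 2 ^ t] := by
    unfold Nat.ModEq
    rw [h1, h2]
  have hdvd : 2 ^ t ∣ (j : ℕ) - (i : ℕ) := (Nat.modEq_iff_dvd' (le_of_lt hij)).mp hmodeq
  have hle : 2 ^ t ≤ (j : ℕ) - (i : ℕ) := Nat.le_of_dvd (by omega) hdvd
  have hdt : d + 1 ≤ 2 ^ t := by
    rw [ht]
    exact Nat.le_pow_clog one_lt_two _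
  omega

end Stmt0Aux

/-- For d ≥ 1, t = ⌈log₂(d+1)⌉, t ≤ r ≤ m, the set D of evaluation vectors
Eval(x_{m-t+1}···x_m · g(x₁,…,x_{m-t})), g of total degree ≤ r−t in the first m−t variables,
is a linear subspace of RM(m,r) of dimension Σ_{i=0}^{r−t} C(m−t,i), all of whose codewords
satisfy the (d,∞)-RLL constraint (lexicographic coordinate ordering). -/
theorem stmt0 (d t m r : ℕ) (hd : 1 ≤ d) (ht : t = Nat.clog 2 (d + 1))
    (htr : t ≤ r) (hrm : r ≤ m) :
    ∃ D : Submodule (ZMod 2) (Fin (2 ^ m) → ZMod 2),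
      (D : Set (Fin (2 ^ m) → ZMod 2)) =
        {c | ∃ g : MvPolynomial (Fin m) (ZMod 2),
              g.totalDegree ≤ r - t ∧
              (∀ j ∈ g.vars, (j : ℕ) < m - t) ∧
              c = evalRM m
                (g * ∏ j ∈ Finset.univ.filter (fun j : Fin m => m - t ≤ (j : ℕ)),
                  MvPolynomial.X j)} ∧
      D ≤ RM m r ∧
      Module.finrank (ZMod 2) D = ∑ i ∈ Finset.range (r - t + 1), (m - t).choose i ∧
      ∀ c ∈ D, RLL d c := by
  have htm : t ≤ m := htr.trans hrm
  have hPi : (∏ j ∈ Finset.univ.filter (fun j : Fin m => m - t ≤ (j : ℕ)), MvPolynomial.X j)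
      = Stmt0Aux.Piprod m t := rfl
  refine ⟨(Stmt0Aux.P m t r).map (Stmt0Aux.L m t), ?_, ?_, Stmt0Aux.finrank_D htr hrm, ?_⟩
  · ext c
    simp only [SetLike.mem_coe, Submodule.mem_map, Set.mem_setOf_eq]
    constructor
    · rintro ⟨p, hp, rfl⟩
      refine ⟨p, ((Stmt0Aux.mem_P p).mp hp).1, ?_, ?_⟩
      · intro jj hjj
        have := ((Stmt0Aux.mem_P p).mp hp).2.2 (Finset.mem_coe.mpr hjj)
        simpa [Stmt0Aux.Sset] using this
      · rw [hPi, ← Stmt0Aux.L_apply]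
    · rintro ⟨g, hdeg, hvars, rfl⟩
      refine ⟨Stmt0Aux.redP g, ?_, ?_⟩
      · rw [Stmt0Aux.mem_P]
        refine ⟨Stmt0Aux.redP_totalDegree g hdeg, ?_, ?_⟩
        · exact (MvPolynomial.mem_restrictDegree (Fin m) (Stmt0Aux.redP g) 1).mp (Stmt0Aux.redP_mem_restrictDegree g)
        · intro i hi
          have h1 := Stmt0Aux.redP_vars g (Finset.mem_coe.mp hi)
          have h2 := hvars i h1
          simp [Stmt0Aux.Sset, h2]
      · rw [Stmt0Aux.L_apply, hPi]
        funext s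
        rw [Stmt0Aux.evalRM_apply, Stmt0Aux.evalRM_apply, map_mul, map_mul,
          Stmt0Aux.eval_redP]
  · rintro c ⟨p, hp, rfl⟩
    exact ⟨p * Stmt0Aux.Piprod m t,
      (Submodule.mem_inf.mp (Stmt0Aux.mul_Pi_mem htr hrm hp)).2,
      (Stmt0Aux.L_apply p).symm⟩
  · rintro c ⟨p, hp, rfl⟩
    exact Stmt0Aux.rll_of_mem hd ht htm rfl
end

section
/- Fix R ∈ (0,1), an integer d ≥ 1, and any sequence (r_m)_{m≥1} of nonnegative integers with lim_{m→∞} C(m, ≤ r_m)/2^m = R. For each m, let L_m denote the maximum dimension of an F₂-linear subspace of RM(m, r_m) all of whose elements satisfy the (d,∞)-RLL constraint under the lexicographic coordinate ordering. Then limsup_{m→∞} L_m/2^m ≤ R/(d+1). -/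
namespace Stmt3Aux

open MvPolynomial Filter

/-! ### Generic linear algebra -/

lemma finrank_map_add_inf_ker {K V W : Type*} [Field K] [AddCommGroup V] [Module K V]
    [AddCommGroup W] [Module K W] [FiniteDimensional K V]
    (φ : V →ₗ[K] W) (D : Submodule K V) :
    Module.finrank K D =
      Module.finrank K (D.map φ) + Module.finrank K ↥(D ⊓ LinearMap.ker φ) := by
  have h := LinearMap.finrank_range_add_finrank_ker (φ.comp D.subtype)
  rw [LinearMap.range_comp, Submodule.range_subtype] at h
  have hker : LinearMap.ker (φ.comp D.subtype)
      = Submodule.comap D.subtype (D ⊓ LinearMap.ker φ) := by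
    rw [LinearMap.ker_comp]
    ext x
    simp only [Submodule.mem_comap, Submodule.mem_inf]
    exact ⟨fun hh => ⟨x.2, hh⟩, fun hh => hh.2⟩
  rw [hker] at h
  rw [← h]
  congr 1
  exact LinearEquiv.finrank_eq
    (Submodule.comapSubtypeEquivOfLe (inf_le_left : D ⊓ LinearMap.ker φ ≤ D))

/-! ### Base case: any RLL-constrained subspace has dimension ≤ ⌈N/(d+1)⌉ -/

noncomputable def blockSum (d N T : ℕ) : (Fin N → ZMod 2) →ₗ[ZMod 2] (Fin T → ZMod 2) :=
  LinearMap.pi fun b =>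
    ∑ j ∈ Finset.univ.filter (fun j : Fin N => (j : ℕ) / (d + 1) = (b : ℕ)),
      LinearMap.proj j

lemma blockSum_apply (d N T : ℕ) (w : Fin N → ZMod 2) (b : Fin T) :
    blockSum d N T w b
      = ∑ j ∈ Finset.univ.filter (fun j : Fin N => (j : ℕ) / (d + 1) = (b : ℕ)), w j := by
  simp [blockSum, LinearMap.pi_apply, LinearMap.sum_apply]

lemma zmod2_eq_one_of_ne_zero : ∀ x : ZMod 2, x ≠ 0 → x = 1 := by decide

lemma rll_bound {d : ℕ} (hd : 1 ≤ d) {N : ℕ} (D : Submodule (ZMod 2) (Fin N → ZMod 2))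
    (h : ∀ c ∈ D, RLL d c) :
    (d + 1) * Module.finrank (ZMod 2) D ≤ N + d := by
  set T := (N + d) / (d + 1) with hT
  have hdisj : D ⊓ LinearMap.ker (blockSum d N T) = ⊥ := by
    rw [Submodule.eq_bot_iff]
    rintro c ⟨hcD, hck⟩
    by_contra hc0
    obtain ⟨p, hp⟩ : ∃ p, c p ≠ 0 := by
      by_contra hall
      push_neg at hall
      exact hc0 (funext hall)
    have hcp1 : c p = 1 := zmod2_eq_one_of_ne_zero _ hp
    have hbT : (p : ℕ) / (d + 1) < T := by
      have h1 : ((p : ℕ) + (d + 1)) / (d + 1) = (p : ℕ) / (d + 1) + 1 :=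
        Nat.add_div_right _ (by omega)
      have h2 : ((p : ℕ) + (d + 1)) / (d + 1) ≤ (N + d) / (d + 1) :=
        Nat.div_le_div_right (by have := p.2; omega)
      omega
    have hzero := congrFun (LinearMap.mem_ker.mp hck) ⟨(p : ℕ) / (d + 1), hbT⟩
    rw [blockSum_apply] at hzero
    have hsum : ∑ j ∈ Finset.univ.filter
        (fun j : Fin N => (j : ℕ) / (d + 1) = (((⟨(p : ℕ) / (d + 1), hbT⟩ : Fin T)) : ℕ)), c j
        = c p := by
      apply Finset.sum_eq_single_of_mem
      · simp
      · intro j hj hjp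
        simp only [Finset.mem_filter] at hj
        have hjq : (j : ℕ) / (d + 1) = (p : ℕ) / (d + 1) := hj.2
        have ej : (d + 1) * ((p : ℕ) / (d + 1)) + (j : ℕ) % (d + 1) = (j : ℕ) := by
          rw [← hjq]; exact Nat.div_add_mod _ _
        have ep : (d + 1) * ((p : ℕ) / (d + 1)) + (p : ℕ) % (d + 1) = (p : ℕ) :=
          Nat.div_add_mod _ _
        have mj : (j : ℕ) % (d + 1) < d + 1 := Nat.mod_lt _ (by omega)
        have mp : (p : ℕ) % (d + 1) < d + 1 := Nat.mod_lt _ (by omega)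
        have hne : (j : ℕ) ≠ (p : ℕ) := fun hh => hjp (Fin.ext hh)
        rcases lt_or_gt_of_ne hne with hlt | hgt
        · by_contra hcj
          have hcj1 : c j = 1 := zmod2_eq_one_of_ne_zero _ hcj
          have := h c hcD j p hcj1 hlt (by omega)
          rw [this] at hcp1
          exact one_ne_zero hcp1.symm
        · exact h c hcD p j hcp1 hgt (by omega)
    rw [hsum, hcp1] at hzero
    exact one_ne_zero hzero
  have hrk := finrank_map_add_inf_ker (blockSum d N T) D
  rw [hdisj, finrank_bot, add_zero] at hrk
  have hle : Module.finrank (ZMod 2) (D.map (blockSum d N T)) ≤ T := by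
    refine le_trans (Submodule.finrank_le _) ?_
    rw [Module.finrank_fintype_fun_eq_card, Fintype.card_fin]
  have : (d + 1) * T ≤ N + d := by
    rw [hT, mul_comm]
    exact Nat.div_mul_le_self _ _
  calc (d + 1) * Module.finrank (ZMod 2) D
      = (d + 1) * Module.finrank (ZMod 2) (D.map (blockSum d N T)) := by rw [hrk]
    _ ≤ (d + 1) * T := Nat.mul_le_mul_left _ hle
    _ ≤ N + d := this

/-! ### Bit representation lemmas -/

lemma bitRepr_lo {n s : ℕ} (hs : s < 2 ^ n) :
    bitRepr (n + 1) s = Fin.cons 0 (bitRepr n s) := by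
  funext j
  refine Fin.cases ?_ (fun i => ?_) j
  · simp only [bitRepr, Fin.cons_zero, Fin.val_zero, Nat.sub_zero, Nat.add_sub_cancel]
    rw [Nat.testBit_lt_two_pow hs]
    simp
  · simp only [bitRepr, Fin.cons_zero, Fin.cons_succ]
    have harith : n + 1 - 1 - ((i.succ : Fin (n + 1)) : ℕ) = n - 1 - (i : ℕ) := by
      rw [Fin.val_succ]; omega
    rw [harith]

lemma bitRepr_hi {n : ℕ} {s : ℕ} (hs : s < 2 ^ n) :
    bitRepr (n + 1) (s + 2 ^ n) = Fin.cons 1 (bitRepr n s) := by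
  funext j
  refine Fin.cases ?_ (fun i => ?_) j
  · simp only [bitRepr, Fin.cons_zero, Fin.val_zero, Nat.sub_zero, Nat.add_sub_cancel]
    rw [add_comm s (2 ^ n), Nat.testBit_two_pow_add_eq, Nat.testBit_lt_two_pow hs]
    simp
  · simp only [bitRepr, Fin.cons_zero, Fin.cons_succ]
    have harith : n + 1 - 1 - ((i.succ : Fin (n + 1)) : ℕ) = n - 1 - (i : ℕ) := by
      rw [Fin.val_succ]; omega
    have hlt : n - 1 - (i : ℕ) < n := by have := i.2; omega
    rw [harith, add_comm s (2 ^ n), Nat.testBit_two_pow_add_gt hlt]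

/-! ### Halving maps -/

def e0 (n : ℕ) : Fin (2 ^ n) → Fin (2 ^ (n + 1)) :=
  fun s => ⟨(s : ℕ), lt_of_lt_of_le s.2 (Nat.pow_le_pow_right (by norm_num) (Nat.le_succ n))⟩

def e1 (n : ℕ) : Fin (2 ^ n) → Fin (2 ^ (n + 1)) :=
  fun s => ⟨(s : ℕ) + 2 ^ n, by have := s.2; have : (2:ℕ) ^ (n+1) = 2 ^ n + 2 ^ n := by ring
                                omega⟩

noncomputable def half0 (n : ℕ) : (Fin (2 ^ (n + 1)) → ZMod 2) →ₗ[ZMod 2] (Fin (2 ^ n) → ZMod 2) :=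
  LinearMap.funLeft (ZMod 2) (ZMod 2) (e0 n)

noncomputable def half1 (n : ℕ) : (Fin (2 ^ (n + 1)) → ZMod 2) →ₗ[ZMod 2] (Fin (2 ^ n) → ZMod 2) :=
  LinearMap.funLeft (ZMod 2) (ZMod 2) (e1 n)

noncomputable def pi2 (n : ℕ) : (Fin (2 ^ (n + 1)) → ZMod 2) →ₗ[ZMod 2] (Fin (2 ^ n) → ZMod 2) :=
  half0 n + half1 n

/-! ### Substitution of the MSB variable -/

noncomputable def subst (n : ℕ) (b : ZMod 2) :
    MvPolynomial (Fin (n + 1)) (ZMod 2) →ₐ[ZMod 2] MvPolynomial (Fin n) (ZMod 2) :=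
  aeval (Fin.cons (C b) X)

lemma evalRM_apply (m : ℕ) (f : MvPolynomial (Fin m) (ZMod 2)) (s : Fin (2 ^ m)) :
    evalRM m f s = aeval (bitRepr m (s : ℕ)) f := rfl

lemma half0_evalRM (n : ℕ) (f : MvPolynomial (Fin (n + 1)) (ZMod 2)) :
    half0 n (evalRM (n + 1) f) = evalRM n (subst n 0 f) := by
  funext s
  have h1 : half0 n (evalRM (n + 1) f) s = aeval (bitRepr (n + 1) (s : ℕ)) f := rfl
  rw [h1, evalRM_apply, subst, comp_aeval_apply, bitRepr_lo s.2]
  have hpt : (fun i : Fin (n + 1) => (aeval (bitRepr n (s : ℕ)))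
        ((Fin.cons (C 0) X : Fin (n + 1) → MvPolynomial (Fin n) (ZMod 2)) i))
      = Fin.cons (0 : ZMod 2) (bitRepr n (s : ℕ)) := by
    funext i
    refine Fin.cases ?_ (fun i => ?_) i <;> simp
  rw [hpt]

lemma half1_evalRM (n : ℕ) (f : MvPolynomial (Fin (n + 1)) (ZMod 2)) :
    half1 n (evalRM (n + 1) f) = evalRM n (subst n 1 f) := by
  funext s
  have h1 : half1 n (evalRM (n + 1) f) s = aeval (bitRepr (n + 1) ((s : ℕ) + 2 ^ n)) f := rfl
  rw [h1, evalRM_apply, subst, comp_aeval_apply, bitRepr_hi s.2]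
  have hpt : (fun i : Fin (n + 1) => (aeval (bitRepr n (s : ℕ)))
        ((Fin.cons (C 1) X : Fin (n + 1) → MvPolynomial (Fin n) (ZMod 2)) i))
      = Fin.cons (1 : ZMod 2) (bitRepr n (s : ℕ)) := by
    funext i
    refine Fin.cases ?_ (fun i => ?_) i <;> simp
  rw [hpt]

lemma pi2_evalRM (n : ℕ) (f : MvPolynomial (Fin (n + 1)) (ZMod 2)) :
    pi2 n (evalRM (n + 1) f) = evalRM n (subst n 0 f + subst n 1 f) := by
  rw [pi2, LinearMap.add_apply, half0_evalRM, half1_evalRM, map_add]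

/-! ### Degree bounds for substitution -/

lemma subst_eq_eval (n : ℕ) (b : ZMod 2) (f : MvPolynomial (Fin (n + 1)) (ZMod 2)) :
    subst n b f = Polynomial.eval (C b) (finSuccEquiv (ZMod 2) n f) := by
  have hcomp : (subst n b) =
      ((Polynomial.aeval (C b : MvPolynomial (Fin n) (ZMod 2))).restrictScalars
          (ZMod 2)).comp (finSuccEquiv (ZMod 2) n).toAlgHom := by
    apply MvPolynomial.algHom_ext
    intro i
    refine Fin.cases ?_ (fun i => ?_) i
    · simp [subst, finSuccEquiv_X_zero]
    · simp [subst, finSuccEquiv_X_succ]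
  rw [hcomp]
  simp [Polynomial.coe_aeval_eq_eval]

lemma totalDegree_subst0_le {n r : ℕ} {f : MvPolynomial (Fin (n + 1)) (ZMod 2)}
    (hf : f.totalDegree ≤ r) : (subst n 0 f).totalDegree ≤ r := by
  rw [subst_eq_eval, map_zero, ← Polynomial.coeff_zero_eq_eval_zero]
  by_cases h : (finSuccEquiv (ZMod 2) n f).coeff 0 = 0
  · simp [h]
  · have := totalDegree_coeff_finSuccEquiv_add_le f 0 h
    omega

lemma totalDegree_sum_subst_le {n r : ℕ} {f : MvPolynomial (Fin (n + 1)) (ZMod 2)}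
    (hf : f.totalDegree ≤ r + 1) :
    (subst n 0 f + subst n 1 f).totalDegree ≤ r := by
  set P := finSuccEquiv (ZMod 2) n f with hP
  have h0 : subst n 0 f = P.coeff 0 := by
    rw [subst_eq_eval, map_zero, ← Polynomial.coeff_zero_eq_eval_zero]
  have h1 : subst n 1 f = P.eval 1 := by rw [subst_eq_eval, map_one]
  have heval : P.eval 1 = ∑ i ∈ Finset.range (P.natDegree + 1), P.coeff i := by
    rw [Polynomial.eval_eq_sum_range]
    simp
  have hsplit : ∑ i ∈ Finset.range (P.natDegree + 1), P.coeff i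
      = P.coeff 0 + ∑ i ∈ Finset.Ico 1 (P.natDegree + 1), P.coeff i := by
    rw [Finset.range_eq_Ico, Finset.sum_eq_sum_Ico_succ_bot (by omega)]
  have hch : P.coeff 0 + P.coeff 0 = 0 := by
    rw [← one_smul (ZMod 2) (P.coeff 0), ← add_smul]
    rw [show (1 + 1 : ZMod 2) = 0 by decide, zero_smul]
  have hcombined : subst n 0 f + subst n 1 f
      = ∑ i ∈ Finset.Ico 1 (P.natDegree + 1), P.coeff i := by
    rw [h0, h1, heval, hsplit, ← add_assoc, hch, zero_add]
  rw [hcombined]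
  refine le_trans (totalDegree_finset_sum _ _) ?_
  apply Finset.sup_le
  intro i hi
  rcases eq_or_ne (P.coeff i) 0 with h | h
  · show totalDegree (P.coeff i) ≤ r
    rw [h, totalDegree_zero]
    omega
  · have hdeg := totalDegree_coeff_finSuccEquiv_add_le f i h
    rw [← hP] at hdeg
    have hi1 : 1 ≤ i := (Finset.mem_Ico.mp hi).1
    show totalDegree (P.coeff i) ≤ r
    omega

/-! ### RLL and kernel lemmas for the halving maps -/

lemma RLL_half0 {d n : ℕ} {x : Fin (2 ^ (n + 1)) → ZMod 2} (h : RLL d x) :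
    RLL d (half0 n x) := by
  intro i j h1 hlt hle
  exact h (e0 n i) (e0 n j) h1 hlt hle

lemma RLL_half1 {d n : ℕ} {x : Fin (2 ^ (n + 1)) → ZMod 2} (h : RLL d x) :
    RLL d (half1 n x) := by
  intro i j h1 hlt hle
  refine h (e1 n i) (e1 n j) h1 ?_ ?_
  · show (i : ℕ) + 2 ^ n < (j : ℕ) + 2 ^ n
    omega
  · show (j : ℕ) + 2 ^ n ≤ (i : ℕ) + 2 ^ n + d
    omega

lemma pi2_inj_on_ker {n : ℕ} {x : Fin (2 ^ (n + 1)) → ZMod 2}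
    (h0 : half0 n x = 0) (h2 : pi2 n x = 0) : x = 0 := by
  have h1 : half1 n x = 0 := by
    have hh := h2
    rw [pi2, LinearMap.add_apply, h0, zero_add] at hh
    exact hh
  funext p
  have hpow : (2 : ℕ) ^ (n + 1) = 2 ^ n + 2 ^ n := by ring
  rcases lt_or_ge (p : ℕ) (2 ^ n) with hp | hp
  · have hz := congrFun h0 ⟨(p : ℕ), hp⟩
    have he : e0 n ⟨(p : ℕ), hp⟩ = p := Fin.ext rfl
    have hz' : x (e0 n ⟨(p : ℕ), hp⟩) = 0 := hz
    rwa [he] at hz'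
  · have hq : (p : ℕ) - 2 ^ n < 2 ^ n := by
      have hp2 := p.2
      omega
    have hz := congrFun h1 ⟨(p : ℕ) - 2 ^ n, hq⟩
    have he : e1 n ⟨(p : ℕ) - 2 ^ n, hq⟩ = p := by
      apply Fin.ext
      show (p : ℕ) - 2 ^ n + 2 ^ n = (p : ℕ)
      omega
    have hz' : x (e1 n ⟨(p : ℕ) - 2 ^ n, hq⟩) = 0 := hz
    rwa [he] at hz'

/-! ### RM(M, 0) contains no nonzero RLL word -/

lemma mem_RM_zero_eq_zero {d M : ℕ} (hd : 1 ≤ d) (hM : 1 ≤ M)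
    {x : Fin (2 ^ M) → ZMod 2} (hx : x ∈ RM M 0) (h : RLL d x) : x = 0 := by
  obtain ⟨f, hf, rfl⟩ := hx
  rw [SetLike.mem_coe, MvPolynomial.mem_restrictTotalDegree, Nat.le_zero] at hf
  have key := (totalDegree_eq_zero_iff _ f).mp hf
  have hC : f = C (coeff 0 f) := by
    ext mo
    rw [coeff_C]
    split_ifs with hmo
    · rw [← hmo]
    · rcases eq_or_ne (coeff mo f) 0 with hc | hc
      · exact hc
      · exfalso
        apply hmo
        have hmem : mo ∈ f.support := mem_support_iff.mpr hc
        ext i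
        exact (key mo hmem i).symm
  have h2M : 1 < 2 ^ M := by
    have h21 : (2 : ℕ) ^ 1 ≤ 2 ^ M := Nat.pow_le_pow_right (by norm_num) hM
    simp at h21
    omega
  rcases (show ∀ b : ZMod 2, b = 0 ∨ b = 1 by decide) (coeff 0 f) with ha | ha
  · rw [hC, ha, map_zero, map_zero]
  · exfalso
    have hval : ∀ s : Fin (2 ^ M), evalRM M f s = 1 := by
      intro s
      rw [evalRM_apply, hC, ha, aeval_C]
      simp
    have h0 : (0 : ℕ) < 2 ^ M := by positivity
    have := h ⟨0, h0⟩ ⟨1, h2M⟩ (hval _) (by norm_num) (by simp; omega)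
    rw [hval _] at this
    exact one_ne_zero this

/-! ### Pascal partial sums -/

lemma pascal_sum (a r : ℕ) :
    ∑ i ∈ Finset.range (r + 2), (a + 1).choose i
      = ∑ i ∈ Finset.range (r + 2), a.choose i + ∑ i ∈ Finset.range (r + 1), a.choose i := by
  induction r with
  | zero =>
    simp [Finset.sum_range_succ, Nat.choose_succ_succ']
    omega
  | succ r ih =>
    rw [show r + 1 + 2 = (r + 2) + 1 by ring]
    rw [Finset.sum_range_succ (fun i => (a + 1).choose i) (r + 2), ih,
        Finset.sum_range_succ (fun i => a.choose i) (r + 2),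
        show r + 1 + 1 = (r + 1) + 1 by ring,
        Finset.sum_range_succ (fun i => a.choose i) (r + 1),
        Nat.choose_succ_succ' a (r + 1)]
    ring

/-! ### The main combinatorial bound -/

lemma main_bound {d : ℕ} (hd : 1 ≤ d) (m : ℕ) :
    ∀ (a r : ℕ) (D : Submodule (ZMod 2) (Fin (2 ^ (m + a)) → ZMod 2)),
      D ≤ RM (m + a) r → (∀ c ∈ D, RLL d c) →
      (d + 1) * Module.finrank (ZMod 2) D
        ≤ (2 ^ m + d) * ∑ i ∈ Finset.range (r + 1), a.choose i := by
  intro a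
  induction a with
  | zero =>
    intro r D hRM hRLL
    have hb := rll_bound hd D hRLL
    have hsum : ∑ i ∈ Finset.range (r + 1), Nat.choose 0 i = 1 := by
      rw [Finset.sum_range_succ' (fun i => Nat.choose 0 i) r]
      simp
    rw [hsum, mul_one]
    simpa using hb
  | succ a ih =>
    intro r D hRM hRLL
    cases r with
    | zero =>
      have hD : D = ⊥ := (Submodule.eq_bot_iff D).mpr fun x hx =>
        mem_RM_zero_eq_zero hd (by omega) (hRM hx) (hRLL x hx)
      rw [hD]
      simp
    | succ r' =>
      set n := m + a with hn
      have hrk := finrank_map_add_inf_ker (half0 n) D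
      set K : Submodule (ZMod 2) (Fin (2 ^ (n + 1)) → ZMod 2)
        := D ⊓ LinearMap.ker (half0 n) with hKdef
      have hKD : K ≤ D := inf_le_left
      have hKdisj : K ⊓ LinearMap.ker (pi2 n) = ⊥ := by
        rw [Submodule.eq_bot_iff]
        rintro x ⟨⟨hxD, hx0⟩, hx2⟩
        exact pi2_inj_on_ker hx0 hx2
      have hrk2 := finrank_map_add_inf_ker (pi2 n) K
      rw [hKdisj, finrank_bot, add_zero] at hrk2
      have hD1RM : D.map (half0 n) ≤ RM n (r' + 1) := by
        rintro x hx
        obtain ⟨c, hc, rfl⟩ := Submodule.mem_map.mp hx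
        obtain ⟨f, hf, rfl⟩ := hRM hc
        rw [SetLike.mem_coe, MvPolynomial.mem_restrictTotalDegree] at hf
        show (half0 n) ((evalRM (n + 1)) f) ∈ RM n (r' + 1)
        rw [half0_evalRM]
        exact Submodule.mem_map.mpr ⟨subst n 0 f,
          by rw [MvPolynomial.mem_restrictTotalDegree]; exact totalDegree_subst0_le hf, rfl⟩
      have hD1RLL : ∀ x ∈ D.map (half0 n), RLL d x := by
        rintro x hx
        obtain ⟨c, hc, rfl⟩ := Submodule.mem_map.mp hx
        exact RLL_half0 (hRLL c hc)
      have hD2RM : K.map (pi2 n) ≤ RM n r' := by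
        rintro x hx
        obtain ⟨c, hc, rfl⟩ := Submodule.mem_map.mp hx
        obtain ⟨f, hf, rfl⟩ := hRM (hKD hc)
        rw [SetLike.mem_coe, MvPolynomial.mem_restrictTotalDegree] at hf
        show (pi2 n) ((evalRM (n + 1)) f) ∈ RM n r'
        rw [pi2_evalRM]
        exact Submodule.mem_map.mpr ⟨subst n 0 f + subst n 1 f,
          by rw [MvPolynomial.mem_restrictTotalDegree]; exact totalDegree_sum_subst_le hf, rfl⟩
      have hD2RLL : ∀ x ∈ K.map (pi2 n), RLL d x := by
        rintro x hx
        obtain ⟨c, hc, rfl⟩ := Submodule.mem_map.mp hx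
        have hc0 : half0 n c = 0 := hc.2
        have hpe : pi2 n c = half1 n c := by
          rw [pi2, LinearMap.add_apply, hc0, zero_add]
        rw [hpe]
        exact RLL_half1 (hRLL c (hKD hc))
      have hrkD : Module.finrank (ZMod 2) D
          = Module.finrank (ZMod 2) (Submodule.map (half0 n) D)
            + Module.finrank (ZMod 2) K := hrk
      have b1 := ih (r' + 1) (D.map (half0 n)) hD1RM hD1RLL
      have b2 := ih r' (K.map (pi2 n)) hD2RM hD2RLL
      calc (d + 1) * Module.finrank (ZMod 2) D
          = (d + 1) * Module.finrank (ZMod 2) (D.map (half0 n))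
            + (d + 1) * Module.finrank (ZMod 2) (K.map (pi2 n)) := by
            rw [hrkD, hrk2]; ring
        _ ≤ (2 ^ m + d) * ∑ i ∈ Finset.range (r' + 1 + 1), a.choose i
            + (2 ^ m + d) * ∑ i ∈ Finset.range (r' + 1), a.choose i := add_le_add b1 b2
        _ = (2 ^ m + d) * ∑ i ∈ Finset.range (r' + 1 + 1), (a + 1).choose i := by
            rw [show r' + 1 + 1 = r' + 2 by ring, pascal_sum]
            ring

/-! ### Central binomial coefficient estimates -/

lemma cb_sq (k : ℕ) : (Nat.centralBinom k) ^ 2 * (2 * k + 1) ≤ 16 ^ k := by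
  induction k with
  | zero => simp [Nat.centralBinom]
  | succ k ih =>
    have hrec := Nat.succ_mul_centralBinom_succ k
    have hsq : (k + 1) ^ 2 * ((Nat.centralBinom (k + 1)) ^ 2 * (2 * (k + 1) + 1))
        = 4 * (2 * k + 1) * (2 * (k + 1) + 1) * ((Nat.centralBinom k) ^ 2 * (2 * k + 1)) := by
      calc (k + 1) ^ 2 * ((Nat.centralBinom (k + 1)) ^ 2 * (2 * (k + 1) + 1))
          = ((k + 1) * Nat.centralBinom (k + 1)) ^ 2 * (2 * (k + 1) + 1) := by ring
        _ = (2 * (2 * k + 1) * Nat.centralBinom k) ^ 2 * (2 * (k + 1) + 1) := by rw [hrec]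
        _ = 4 * (2 * k + 1) * (2 * (k + 1) + 1) * ((Nat.centralBinom k) ^ 2 * (2 * k + 1)) := by
            ring
    have hb1 : 4 * (2 * k + 1) * (2 * (k + 1) + 1) * ((Nat.centralBinom k) ^ 2 * (2 * k + 1))
        ≤ 4 * (2 * k + 1) * (2 * (k + 1) + 1) * 16 ^ k := Nat.mul_le_mul_left _ ih
    have hb2 : 4 * (2 * k + 1) * (2 * (k + 1) + 1) ≤ 16 * (k + 1) ^ 2 := by nlinarith
    have hb3 : 4 * (2 * k + 1) * (2 * (k + 1) + 1) * 16 ^ k ≤ 16 * (k + 1) ^ 2 * 16 ^ k :=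
      Nat.mul_le_mul_right _ hb2
    have hfin : (k + 1) ^ 2 * ((Nat.centralBinom (k + 1)) ^ 2 * (2 * (k + 1) + 1))
        ≤ (k + 1) ^ 2 * 16 ^ (k + 1) := by
      rw [hsq]
      calc 4 * (2 * k + 1) * (2 * (k + 1) + 1) * ((Nat.centralBinom k) ^ 2 * (2 * k + 1))
          ≤ 16 * (k + 1) ^ 2 * 16 ^ k := le_trans hb1 hb3
        _ = (k + 1) ^ 2 * 16 ^ (k + 1) := by ring
    exact Nat.le_of_mul_le_mul_left hfin (by positivity)

lemma choose_half_sq (k : ℕ) : (k.choose (k / 2)) ^ 2 * (k + 1) ≤ 4 ^ k := by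
  rcases Nat.even_or_odd k with ⟨j, hj⟩ | ⟨j, hj⟩
  · have hk : k = 2 * j := by omega
    subst hk
    have hdiv : 2 * j / 2 = j := by omega
    rw [hdiv]
    have hcb : (2 * j).choose j = Nat.centralBinom j := rfl
    rw [hcb]
    have h16 : (16 : ℕ) ^ j = 4 ^ (2 * j) := by
      rw [pow_mul]
      norm_num
    have := cb_sq j
    omega
  · have hk : k = 2 * j + 1 := by omega
    subst hk
    have hdiv : (2 * j + 1) / 2 = j := by omega
    rw [hdiv]
    have hdb : Nat.centralBinom (j + 1) = 2 * ((2 * j + 1).choose j) := by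
      have h1 : Nat.centralBinom (j + 1) = (2 * j + 1 + 1).choose (j + 1) := by
        unfold Nat.centralBinom
        congr 1
      rw [h1, Nat.choose_succ_succ' (2 * j + 1) j]
      have h2 : (2 * j + 1).choose (j + 1) = (2 * j + 1).choose j := by
        have := Nat.choose_symm (show j + 1 ≤ 2 * j + 1 by omega)
        simpa [show 2 * j + 1 - (j + 1) = j by omega] using this.symm
      omega
    have hcb := cb_sq (j + 1)
    rw [hdb] at hcb
    have h16 : (16 : ℕ) ^ (j + 1) = 4 * 4 ^ (2 * j + 1) := by
      have h1 : (16 : ℕ) ^ (j + 1) = 4 ^ (2 * (j + 1)) := by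
        rw [show (16 : ℕ) = 4 ^ 2 by norm_num, ← pow_mul]
      rw [h1, show 2 * (j + 1) = (2 * j + 1) + 1 by omega, pow_succ]
      ring
    have hexp : (2 * ((2 * j + 1).choose j)) ^ 2 * (2 * (j + 1) + 1)
        = 4 * ((2 * j + 1).choose j ^ 2 * (2 * j + 3)) := by ring
    rw [hexp, h16] at hcb
    have h4 : (2 * j + 1).choose j ^ 2 * (2 * j + 3) ≤ 4 ^ (2 * j + 1) :=
      Nat.le_of_mul_le_mul_left hcb (by norm_num)
    have : (2 * j + 1).choose j ^ 2 * (2 * j + 1 + 1) ≤ (2 * j + 1).choose j ^ 2 * (2 * j + 3) :=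
      Nat.mul_le_mul_left _ (by omega)
    omega

lemma tend_mid : Filter.Tendsto (fun k : ℕ => ((k.choose (k / 2) : ℝ)) / 2 ^ k)
    Filter.atTop (nhds 0) := by
  have hb : ∀ k : ℕ, ((k.choose (k / 2) : ℝ)) / 2 ^ k ≤ Real.sqrt (1 / (k + 1)) := by
    intro k
    have hsq : (((k.choose (k / 2) : ℝ)) / 2 ^ k) ^ 2 ≤ 1 / ((k : ℝ) + 1) := by
      have hn := choose_half_sq k
      have hcast : ((k.choose (k / 2) : ℝ)) ^ 2 * ((k : ℝ) + 1) ≤ 4 ^ k := by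
        exact_mod_cast hn
      have h4 : ((2 : ℝ) ^ k) ^ 2 = 4 ^ k := by
        rw [← pow_mul, show (4 : ℝ) = 2 ^ 2 by norm_num, ← pow_mul]
        ring_nf
      rw [div_pow, h4, div_le_div_iff₀ (by positivity) (by positivity)]
      linarith
    rw [Real.le_sqrt (by positivity) (by positivity)]
    exact hsq
  have hg : Filter.Tendsto (fun k : ℕ => Real.sqrt (1 / (k + 1))) Filter.atTop (nhds 0) := by
    have h1 : Filter.Tendsto (fun k : ℕ => 1 / ((k : ℝ) + 1)) Filter.atTop (nhds 0) :=
      tendsto_one_div_add_atTop_nhds_zero_nat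
    have h2 := (Real.continuous_sqrt.tendsto 0).comp h1
    rw [Real.sqrt_zero] at h2
    exact h2
  exact squeeze_zero (fun k => by positivity) hb hg

/-! ### Partial binomial sums across rows -/

lemma sum_choose_step (nn rr : ℕ) :
    2 * ∑ i ∈ Finset.range (rr + 1), nn.choose i
      = ∑ i ∈ Finset.range (rr + 1), (nn + 1).choose i + nn.choose rr := by
  induction rr with
  | zero => simp
  | succ rr ih =>
    rw [Finset.sum_range_succ (fun i => nn.choose i) (rr + 1),
        Finset.sum_range_succ (fun i => (nn + 1).choose i) (rr + 1),
        Nat.mul_add, ih, Nat.choose_succ_succ' nn rr]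
    ring

/-! ### Limit of shifted binomial sums -/

lemma tend_sub (R : ℝ) (r : ℕ → ℕ)
    (hlim : Filter.Tendsto
      (fun m : ℕ => (∑ i ∈ Finset.range (r m + 1), (m.choose i : ℝ)) / 2 ^ m)
      Filter.atTop (nhds R)) (t : ℕ) :
    Filter.Tendsto
      (fun m : ℕ => (∑ i ∈ Finset.range (r m + 1), ((m - t).choose i : ℝ)) / 2 ^ (m - t))
      Filter.atTop (nhds R) := by
  induction t with
  | zero => simpa using hlim
  | succ t ih =>
    have hid : ∀ᶠ m in Filter.atTop,
        (∑ i ∈ Finset.range (r m + 1), ((m - t).choose i : ℝ)) / 2 ^ (m - t)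
          + ((m - (t + 1)).choose (r m) : ℝ) / 2 ^ (m - t)
        = (∑ i ∈ Finset.range (r m + 1), ((m - (t + 1)).choose i : ℝ)) / 2 ^ (m - (t + 1)) := by
      filter_upwards [Filter.eventually_ge_atTop (t + 1)] with m hm
      have h1 : m - t = (m - (t + 1)) + 1 := by omega
      set nn := m - (t + 1) with hnn
      rw [h1]
      have hcast : 2 * (∑ i ∈ Finset.range (r m + 1), (nn.choose i : ℝ))
          = (∑ i ∈ Finset.range (r m + 1), ((nn + 1).choose i : ℝ)) + (nn.choose (r m) : ℝ) := by
        exact_mod_cast sum_choose_step nn (r m)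
      have hpow : (2 : ℝ) ^ (nn + 1) = 2 * 2 ^ nn := by ring
      rw [hpow, ← add_div, ← hcast,
        mul_div_mul_left _ _ (two_ne_zero : (2 : ℝ) ≠ 0)]
    have hE : Filter.Tendsto (fun m : ℕ => ((m - (t + 1)).choose (r m) : ℝ) / 2 ^ (m - t))
        Filter.atTop (nhds 0) := by
      have hcomp := tend_mid.comp (Filter.tendsto_sub_atTop_nat (t + 1))
      refine squeeze_zero' (Filter.Eventually.of_forall fun m => by positivity) ?_ hcomp
      filter_upwards [Filter.eventually_ge_atTop (t + 1)] with m hm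
      have h1 : m - t = (m - (t + 1)) + 1 := by omega
      rw [h1]
      show ((m - (t + 1)).choose (r m) : ℝ) / 2 ^ ((m - (t + 1)) + 1)
        ≤ (((m - (t + 1)).choose ((m - (t + 1)) / 2) : ℝ)) / 2 ^ (m - (t + 1))
      gcongr
      · exact_mod_cast Nat.choose_le_middle (r m) (m - (t + 1))
      · exact one_le_two
      · omega
    have hsum := ih.add hE
    rw [add_zero] at hsum
    exact hsum.congr' hid

/-! ### Bounding the supremum -/

lemma sSup_bound {d : ℕ} (hd : 1 ≤ d) (r : ℕ → ℕ) (t m : ℕ) (hm : t ≤ m) :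
    (d + 1) * sSup {k : ℕ | ∃ D : Submodule (ZMod 2) (Fin (2 ^ m) → ZMod 2),
        D ≤ RM m (r m) ∧ (∀ c ∈ D, RLL d c) ∧ Module.finrank (ZMod 2) D = k}
      ≤ (2 ^ t + d) * ∑ i ∈ Finset.range (r m + 1), (m - t).choose i := by
  obtain ⟨a, rfl⟩ : ∃ a, m = t + a := ⟨m - t, by omega⟩
  rw [Nat.add_sub_cancel_left]
  set X := (2 ^ t + d) * ∑ i ∈ Finset.range (r (t + a) + 1), a.choose i with hX
  have hne : ∃ k, k ∈ {k : ℕ | ∃ D : Submodule (ZMod 2) (Fin (2 ^ (t + a)) → ZMod 2),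
      D ≤ RM (t + a) (r (t + a)) ∧ (∀ c ∈ D, RLL d c) ∧ Module.finrank (ZMod 2) D = k} := by
    refine ⟨0, ⊥, bot_le, ?_, finrank_bot _ _⟩
    intro c hc
    rw [Submodule.mem_bot] at hc
    subst hc
    intro i j h1 h2 h3
    simp
  have hub : ∀ k ∈ {k : ℕ | ∃ D : Submodule (ZMod 2) (Fin (2 ^ (t + a)) → ZMod 2),
      D ≤ RM (t + a) (r (t + a)) ∧ (∀ c ∈ D, RLL d c) ∧ Module.finrank (ZMod 2) D = k},
      k ≤ X / (d + 1) := by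
    rintro k ⟨D, hle, hRLL, rfl⟩
    have hmb := main_bound hd t a (r (t + a)) D hle hRLL
    rw [Nat.le_div_iff_mul_le (show 0 < d + 1 by omega)]
    rw [← hX] at hmb
    rw [mul_comm]
    exact hmb
  have hsup := csSup_le hne hub
  calc (d + 1) * sSup _ ≤ (d + 1) * (X / (d + 1)) := Nat.mul_le_mul_left _ hsup
    _ ≤ X := by rw [mul_comm]; exact Nat.div_mul_le_self _ _

end Stmt3Aux

/-- If C(m,≤r_m)/2^m → R ∈ (0,1) and L_m is the maximum dimension of a
linear subspace of RM(m,r_m) all of whose elements satisfy the (d,∞)-RLL constraint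
(lexicographic ordering), then limsup L_m/2^m ≤ R/(d+1). -/
theorem stmt3 (R : ℝ) (hR : R ∈ Set.Ioo (0 : ℝ) 1) (d : ℕ) (hd : 1 ≤ d) (r : ℕ → ℕ)
    (hlim : Filter.Tendsto
      (fun m : ℕ => (∑ i ∈ Finset.range (r m + 1), (m.choose i : ℝ)) / 2 ^ m)
      Filter.atTop (nhds R)) :
    Filter.limsup
      (fun m : ℕ =>
        ((sSup {k : ℕ | ∃ D : Submodule (ZMod 2) (Fin (2 ^ m) → ZMod 2),
            D ≤ RM m (r m) ∧ (∀ c ∈ D, RLL d c) ∧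
            Module.finrank (ZMod 2) D = k} : ℕ) : ℝ) / 2 ^ m)
      Filter.atTop ≤ R / (d + 1) := by
  obtain ⟨hR0, hR1⟩ := hR
  set u : ℕ → ℝ := fun m : ℕ =>
    ((sSup {k : ℕ | ∃ D : Submodule (ZMod 2) (Fin (2 ^ m) → ZMod 2),
        D ≤ RM m (r m) ∧ (∀ c ∈ D, RLL d c) ∧
        Module.finrank (ZMod 2) D = k} : ℕ) : ℝ) / 2 ^ m with hu
  have hu0 : ∀ m, 0 ≤ u m := fun m => by positivity
  have hcob : Filter.IsCoboundedUnder (· ≤ ·) Filter.atTop u :=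
    Filter.isCoboundedUnder_le_of_le Filter.atTop hu0
  have hkey : ∀ t : ℕ, Filter.limsup u Filter.atTop
      ≤ ((2 ^ t + d : ℝ) / ((d + 1) * 2 ^ t)) * R := by
    intro t
    have hv : Filter.Tendsto
        (fun m : ℕ => ((2 ^ t + d : ℝ) / ((d + 1) * 2 ^ t))
          * ((∑ i ∈ Finset.range (r m + 1), ((m - t).choose i : ℝ)) / 2 ^ (m - t)))
        Filter.atTop (nhds (((2 ^ t + d : ℝ) / ((d + 1) * 2 ^ t)) * R)) :=
      (Stmt3Aux.tend_sub R r hlim t).const_mul _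
    refine le_trans (Filter.limsup_le_limsup ?_ hcob hv.isBoundedUnder_le)
      (le_of_eq hv.limsup_eq)
    filter_upwards [Filter.eventually_ge_atTop t] with m hm
    have hnat := Stmt3Aux.sSup_bound hd r t m hm
    have hcast : ((d : ℝ) + 1) * ((sSup {k : ℕ |
          ∃ D : Submodule (ZMod 2) (Fin (2 ^ m) → ZMod 2),
          D ≤ RM m (r m) ∧ (∀ c ∈ D, RLL d c) ∧
          Module.finrank (ZMod 2) D = k} : ℕ) : ℝ)
        ≤ ((2 : ℝ) ^ t + d) * (∑ i ∈ Finset.range (r m + 1), ((m - t).choose i : ℝ)) := by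
      exact_mod_cast hnat
    have hpow : (2 : ℝ) ^ m = 2 ^ t * 2 ^ (m - t) := by
      rw [← pow_add]
      congr 1
      omega
    have hrhs : ((2 ^ t + d : ℝ) / ((d + 1) * 2 ^ t))
          * ((∑ i ∈ Finset.range (r m + 1), ((m - t).choose i : ℝ)) / 2 ^ (m - t))
        = (((2 : ℝ) ^ t + d) * (∑ i ∈ Finset.range (r m + 1), ((m - t).choose i : ℝ)))
            / (((d : ℝ) + 1) * 2 ^ m) := by
      rw [div_mul_div_comm, hpow]
      ring
    show u m ≤ _
    rw [hu, hrhs]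
    have hden : (0 : ℝ) < 2 ^ m := by positivity
    have hden2 : (0 : ℝ) < ((d : ℝ) + 1) * 2 ^ m := by positivity
    rw [div_le_div_iff₀ hden hden2]
    nlinarith [mul_le_mul_of_nonneg_right hcast (le_of_lt hden)]
  have hfin : Filter.Tendsto (fun t : ℕ => ((2 ^ t + d : ℝ) / ((d + 1) * 2 ^ t)) * R)
      Filter.atTop (nhds (R / (d + 1))) := by
    have heq : ∀ t : ℕ, ((2 ^ t + d : ℝ) / ((d + 1) * 2 ^ t)) * R
        = R / (d + 1) + (R * d / (d + 1)) * (1 / 2 : ℝ) ^ t := by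
      intro t
      have h1 : ((d : ℝ) + 1) ≠ 0 := by positivity
      have h2 : ((2 : ℝ) ^ t) ≠ 0 := by positivity
      rw [div_pow, one_pow]
      field_simp
    have h0 : Filter.Tendsto (fun t : ℕ => (1 / 2 : ℝ) ^ t) Filter.atTop (nhds 0) :=
      tendsto_pow_atTop_nhds_zero_of_lt_one (by norm_num) (by norm_num)
    have h1 := (h0.const_mul (R * d / ((d : ℝ) + 1))).const_add (R / ((d : ℝ) + 1))
    rw [mul_zero, add_zero] at h1
    exact h1.congr (fun t => (heq t).symm)
  exact ge_of_tendsto' hfin hkey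
end

section
/- Fix R ∈ (0,1), an integer d ≥ 1, a sequence (r_m)_{m≥1} of nonnegative integers with lim_{m→∞} C(m, ≤ r_m)/2^m = R, and a sequence of Gray permutations (π_m)_{m≥1}. For each m, let L_m denote the maximum dimension of an F₂-linear subspace D of RM(m, r_m) such that for every c = (c_0,…,c_{2^m−1}) ∈ D, the permuted word (c_{π_m(0)}, c_{π_m(1)}, …, c_{π_m(2^m−1)}) satisfies the (d,∞)-RLL constraint. Then limsup_{m→∞} L_m/2^m ≤ R/(d+1). -/
/-- A Gray permutation of {0,…,2^m−1}: the m-bit binary representations of consecutive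
values π(j−1), π(j) differ in exactly one bit position. -/
def IsGray (m : ℕ) (π : Equiv.Perm (Fin (2 ^ m))) : Prop :=
  ∀ j : Fin (2 ^ m), ∀ h : (j : ℕ) + 1 < 2 ^ m,
    ((Finset.range m).filter fun i =>
      Nat.testBit ((π j : Fin (2 ^ m)) : ℕ) i ≠
        Nat.testBit ((π (⟨(j : ℕ) + 1, h⟩ : Fin (2 ^ m)) : Fin (2 ^ m)) : ℕ) i).card = 1


open Finset Module Submodule

section
variable {F : Type} [Field F] {N : ℕ}

def prj (S : Finset (Fin N)) : (Fin N → F) →ₗ[F] (Fin N → F) where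
  toFun c := fun j => if j ∈ S then c j else 0
  map_add' x y := by funext j; by_cases h : j ∈ S <;> simp [h]
  map_smul' a x := by funext j; by_cases h : j ∈ S <;> simp [h]

lemma prj_apply (S : Finset (Fin N)) (c : Fin N → F) (j : Fin N) :
    prj S c j = if j ∈ S then c j else 0 := rfl

lemma prj_prj (A B : Finset (Fin N)) (c : Fin N → F) :
    prj A (prj B c) = prj (A ∩ B) c := by
  funext j
  by_cases hA : j ∈ A <;> by_cases hB : j ∈ B <;> simp [prj_apply, hA, hB]

lemma prj_univ : (prj (Finset.univ : Finset (Fin N)) : (Fin N → F) →ₗ[F] _) = LinearMap.id := by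
  apply LinearMap.ext; intro c; funext j; simp [prj_apply]

lemma prj_empty : (prj (∅ : Finset (Fin N)) : (Fin N → F) →ₗ[F] _) = 0 := by
  apply LinearMap.ext; intro c; funext j; simp [prj_apply]

lemma prj_comp (A B : Finset (Fin N)) :
    ((prj A : (Fin N → F) →ₗ[F] _).comp (prj B)) = prj (A ∩ B) :=
  LinearMap.ext fun c => prj_prj A B c

/-- rank-nullity for the image of a submodule -/
lemma finrank_map_add_inf_ker {V W : Type} [AddCommGroup V] [Module F V]
    [AddCommGroup W] [Module F W] [FiniteDimensional F V]
    (p : Submodule F V) (f : V →ₗ[F] W) :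
    finrank F (p.map f) + finrank F (p ⊓ LinearMap.ker f : Submodule F V) = finrank F p := by
  have h := LinearMap.finrank_range_add_finrank_ker (f.domRestrict p)
  rw [LinearMap.range_domRestrict, LinearMap.ker_domRestrict] at h
  have e : (Submodule.comap p.subtype (LinearMap.ker f) : Submodule F p) ≃ₗ[F]
      (p ⊓ LinearMap.ker f : Submodule F V) :=
    (Submodule.equivSubtypeMap p (Submodule.comap p.subtype (LinearMap.ker f))).trans
      (LinearEquiv.ofEq _ _ (Submodule.map_comap_subtype _ _))
  rw [e.finrank_eq] at h
  exact h
end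
section
variable {F : Type} [Field F] {N : ℕ}

noncomputable def rk (C : Submodule F (Fin N → F)) (S : Finset (Fin N)) : ℕ :=
  finrank F (C.map (prj S))

lemma map_prj_of_subset (C : Submodule F (Fin N → F)) {A B : Finset (Fin N)} (h : A ⊆ B) :
    (C.map (prj B)).map (prj A) = C.map (prj A) := by
  rw [← Submodule.map_comp, prj_comp, Finset.inter_eq_left.mpr h]

lemma rk_submodular (C : Submodule F (Fin N → F)) (A B : Finset (Fin N)) :
    rk C (A ∪ B) + rk C (A ∩ B) ≤ rk C A + rk C B := by
  classical
  have h2 := finrank_map_add_inf_ker (C.map (prj (A ∪ B))) (prj A (F := F))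
  rw [map_prj_of_subset C (Finset.subset_union_left)] at h2
  have h4 := finrank_map_add_inf_ker (C.map (prj B)) (prj (A ∩ B) (F := F))
  rw [map_prj_of_subset C (Finset.inter_subset_right)] at h4
  have h5 : (C.map (prj (A ∪ B)) ⊓ LinearMap.ker (prj A) : Submodule F (Fin N → F)) ≤
      C.map (prj B) ⊓ LinearMap.ker (prj (A ∩ B)) := by
    rintro x hx0
    obtain ⟨hx, hker⟩ := Submodule.mem_inf.mp hx0
    rw [LinearMap.mem_ker] at hker
    rw [Submodule.mem_inf]
    obtain ⟨c, hc, rfl⟩ := hx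
    have hA : ∀ j ∈ A, prj (A ∪ B) c j = 0 := by
      intro j hj
      have := congrFun hker j
      simpa [prj_apply, hj] using this
    constructor
    · refine ⟨c, hc, ?_⟩
      funext j
      by_cases hB : j ∈ B
      · simp [prj_apply, hB]
      · by_cases hA' : j ∈ A
        · simpa [prj_apply, hB, hA'] using (hA j hA').symm
        · simp [prj_apply, hB, hA']
    · rw [LinearMap.mem_ker]
      funext j
      by_cases hj : j ∈ A ∩ B
      · have hjA : j ∈ A := (Finset.mem_inter.mp hj).1
        simp [prj_apply, hj, hA j hjA]
      · simp [prj_apply, hj]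
  have h6 : finrank F (C.map (prj (A ∪ B)) ⊓ LinearMap.ker (prj A) : Submodule F (Fin N → F)) ≤
      finrank F (C.map (prj B) ⊓ LinearMap.ker (prj (A ∩ B)) : Submodule F (Fin N → F)) :=
    Submodule.finrank_mono h5
  unfold rk
  omega

end
section
variable {F : Type} [Field F] {N : ℕ}

lemma comp_symm_comp (σ : Equiv.Perm (Fin N)) (x : Fin N → F) : (x ∘ σ.symm) ∘ σ = x := by
  funext j; simp

lemma rk_image_symm (C : Submodule F (Fin N → F)) (σ : Equiv.Perm (Fin N))
    (hC : ∀ c, c ∈ C ↔ c ∘ σ ∈ C) (Q : Finset (Fin N)) :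
    rk C (Q.image σ.symm) = rk C Q := by
  classical
  set T : (Fin N → F) ≃ₗ[F] (Fin N → F) := LinearEquiv.funCongrLeft F F σ with hT
  have hTapp : ∀ c : Fin N → F, T c = c ∘ σ := fun c => rfl
  have hCmap : C.map (T : (Fin N → F) →ₗ[F] (Fin N → F)) = C := by
    apply le_antisymm
    · rintro x ⟨c, hc, rfl⟩
      exact (hC c).mp hc
    · intro x hx
      refine ⟨x ∘ σ.symm, ?_, ?_⟩
      · exact (hC _).mpr (by rw [comp_symm_comp]; exact hx)
      · rw [LinearEquiv.coe_coe, hTapp, comp_symm_comp]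
  have hconj : ((prj (Q.image σ.symm) : (Fin N → F) →ₗ[F] _).comp (T : (Fin N → F) →ₗ[F] _))
      = (T : (Fin N → F) →ₗ[F] _).comp (prj Q) := by
    apply LinearMap.ext
    intro c
    funext j
    have hmem : j ∈ Q.image σ.symm ↔ σ j ∈ Q := by
      simp only [Finset.mem_image]
      constructor
      · rintro ⟨q, hq, rfl⟩; simpa using hq
      · intro hq; exact ⟨σ j, hq, by simp⟩
    simp only [LinearMap.comp_apply, LinearEquiv.coe_coe, hTapp, prj_apply, Function.comp_apply]
    by_cases hj : σ j ∈ Q <;> simp [prj_apply, hmem, hj]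
  have : C.map (prj (Q.image σ.symm)) = (C.map (prj Q)).map (T : (Fin N → F) →ₗ[F] _) := by
    conv_lhs => rw [← hCmap]
    rw [← Submodule.map_comp, hconj, Submodule.map_comp]
  unfold rk
  rw [this, LinearEquiv.finrank_map_eq]

lemma rk_empty (C : Submodule F (Fin N → F)) : rk C ∅ = 0 := by
  unfold rk
  rw [prj_empty, Submodule.map_zero, finrank_bot]

lemma rk_density (C : Submodule F (Fin N → F))
    (htrans : ∀ i j : Fin N, ∃ σ : Equiv.Perm (Fin N),
      (∀ c, c ∈ C ↔ c ∘ σ ∈ C) ∧ σ.symm i = j)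
    (Q : Finset (Fin N)) :
    Q.card * rk C Finset.univ ≤ N * rk C Q := by
  classical
  set h : Finset (Fin N) → ℤ := fun Q => (N : ℤ) * rk C Q - Q.card * rk C Finset.univ with hh
  have hsub : ∀ A B : Finset (Fin N), h (A ∪ B) + h (A ∩ B) ≤ h A + h B := by
    intro A B
    have h1 : ((rk C (A ∪ B) : ℤ)) + rk C (A ∩ B) ≤ rk C A + rk C B := by
      exact_mod_cast rk_submodular C A B
    have h2 : (((A ∪ B).card : ℤ)) + (A ∩ B).card = A.card + B.card := by
      exact_mod_cast Finset.card_union_add_card_inter A B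
    have h3 := mul_le_mul_of_nonneg_left h1 (show (0:ℤ) ≤ N by positivity)
    simp only [hh]
    nlinarith [h2, h3]
  obtain ⟨Q₀, -, hQ₀⟩ := Finset.exists_min_image (Finset.univ : Finset (Finset (Fin N))) h
    ⟨∅, Finset.mem_univ _⟩
  have hQ₀' : ∀ Q' : Finset (Fin N), h Q₀ ≤ h Q' := fun Q' => hQ₀ Q' (Finset.mem_univ _)
  set M : Finset (Finset (Fin N)) := Finset.univ.filter (fun Q => h Q = h Q₀) with hM
  have hMmem : ∀ {Q : Finset (Fin N)}, Q ∈ M ↔ h Q = h Q₀ := by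
    intro Q; simp [hM]
  have hclosure : ∀ A B : Finset (Fin N), A ∈ M → B ∈ M → A ∪ B ∈ M := by
    intro A B hA hB
    rw [hMmem] at hA hB ⊢
    have := hsub A B
    have h1 := hQ₀' (A ∪ B)
    have h2 := hQ₀' (A ∩ B)
    omega
  obtain ⟨Qs, hQsM, hQsmax⟩ := Finset.exists_max_image M Finset.card
    ⟨Q₀, hMmem.mpr rfl⟩
  have hmin0 : h Q₀ = 0 := by
    rcases Finset.eq_empty_or_nonempty Qs with hemp | ⟨i₀, hi₀⟩
    · have := hMmem.mp hQsM
      rw [hemp] at this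
      rw [← this]
      simp [hh, rk_empty]
    · -- Qs = univ
      have huniv : Qs = Finset.univ := by
        apply Finset.eq_univ_of_forall
        intro j
        obtain ⟨σ, hCσ, hσ⟩ := htrans i₀ j
        have himg : Qs.image σ.symm ∈ M := by
          rw [hMmem]
          have hbase := hMmem.mp hQsM
          simp only [hh] at hbase ⊢
          rw [rk_image_symm C σ hCσ Qs, Finset.card_image_of_injective _ (Equiv.injective _)]
          exact hbase
        have hun : Qs ∪ Qs.image σ.symm ∈ M := hclosure _ _ hQsM himg
        have hcard : (Qs ∪ Qs.image σ.symm).card ≤ Qs.card := hQsmax _ hun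
        have : Qs ∪ Qs.image σ.symm = Qs :=
          (Finset.eq_of_subset_of_card_le Finset.subset_union_left hcard).symm
        have hjmem : j ∈ Qs.image σ.symm := by
          rw [← hσ]
          exact Finset.mem_image_of_mem _ hi₀
        rw [← this]
        exact Finset.mem_union_right _ hjmem
      have := hMmem.mp hQsM
      rw [huniv] at this
      rw [← this]
      simp only [hh, Finset.card_univ, Fintype.card_fin]
      ring
  have := hQ₀' Q
  rw [hmin0] at this
  simp only [hh] at this
  have : (Q.card : ℤ) * rk C Finset.univ ≤ (N : ℤ) * rk C Q := by linarith
  exact_mod_cast this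
end



lemma zmod2_pow (x : ZMod 2) {k : ℕ} (hk : k ≠ 0) : x ^ k = x := by
  induction k with
  | zero => exact absurd rfl hk
  | succ n ih =>
    rcases Nat.eq_zero_or_pos n with h | h
    · subst h; exact pow_one x
    · rw [pow_succ, ih (Nat.pos_iff_ne_zero.mp h)]
      have hxx : ∀ y : ZMod 2, y * y = y := by decide
      exact hxx x

/-- evaluation vector of the squarefree monomial ∏_{i∈T} Xᵢ -/
def vT (m : ℕ) (T : Finset (Fin m)) : Fin (2 ^ m) → ZMod 2 :=
  fun s => ∏ i ∈ T, bitRepr m (s : ℕ) i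

noncomputable def genF (m r : ℕ) : Finset (Fin (2 ^ m) → ZMod 2) :=
  ((Finset.univ : Finset (Finset (Fin m))).filter (fun T => T.card ≤ r)).image (vT m)

lemma evalRM_apply (m : ℕ) (f : MvPolynomial (Fin m) (ZMod 2)) (s : Fin (2 ^ m)) :
    evalRM m f s = MvPolynomial.aeval (bitRepr m (s : ℕ)) f := rfl

lemma evalRM_monomial (m : ℕ) (v : Fin m →₀ ℕ) :
    evalRM m (MvPolynomial.monomial v 1) = vT m v.support := by
  funext s
  rw [evalRM_apply, MvPolynomial.aeval_monomial, map_one, one_mul]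
  unfold vT
  rw [Finsupp.prod]
  apply Finset.prod_congr rfl
  intro i hi
  exact zmod2_pow _ (Finsupp.mem_support_iff.mp hi)

lemma RM_eq_span (m r : ℕ) :
    RM m r = Submodule.span (ZMod 2) (genF m r : Set (Fin (2 ^ m) → ZMod 2)) := by
  apply le_antisymm
  · rintro c ⟨f, hf, rfl⟩
    rw [SetLike.mem_coe, MvPolynomial.mem_restrictTotalDegree] at hf
    rw [MvPolynomial.as_sum f, map_sum]
    apply Submodule.sum_mem
    intro v hv
    have h1 : (MvPolynomial.monomial v) (MvPolynomial.coeff v f)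
        = (MvPolynomial.coeff v f) • (MvPolynomial.monomial v) (1 : ZMod 2) := by
      rw [MvPolynomial.smul_monomial, smul_eq_mul, mul_one]
    rw [h1, map_smul]
    apply Submodule.smul_mem
    apply Submodule.subset_span
    rw [evalRM_monomial]
    simp only [genF, Finset.coe_image, Set.mem_image, Finset.mem_coe, Finset.mem_filter]
    refine ⟨v.support, ⟨Finset.mem_univ _, ?_⟩, rfl⟩
    calc v.support.card = ∑ _i ∈ v.support, 1 := by simp
    _ ≤ ∑ i ∈ v.support, v i :=
        Finset.sum_le_sum (fun i hi => Nat.one_le_iff_ne_zero.mpr (Finsupp.mem_support_iff.mp hi))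
    _ ≤ f.totalDegree := MvPolynomial.le_totalDegree hv
    _ ≤ r := hf
  · rw [Submodule.span_le]
    rintro c hc
    simp only [genF, Finset.coe_image, Set.mem_image, Finset.mem_coe, Finset.mem_filter] at hc
    obtain ⟨T, ⟨-, hT⟩, rfl⟩ := hc
    refine ⟨∏ i ∈ T, MvPolynomial.X i, ?_, ?_⟩
    · rw [SetLike.mem_coe, MvPolynomial.mem_restrictTotalDegree]
      calc (∏ i ∈ T, MvPolynomial.X i : MvPolynomial (Fin m) (ZMod 2)).totalDegree
          ≤ ∑ i ∈ T, (MvPolynomial.X i : MvPolynomial (Fin m) (ZMod 2)).totalDegree :=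
            MvPolynomial.totalDegree_finset_prod _ _
      _ = ∑ _i ∈ T, 1 := by
            apply Finset.sum_congr rfl; intro i _; exact MvPolynomial.totalDegree_X i
      _ = T.card := by simp
      _ ≤ r := hT
    · funext s
      rw [evalRM_apply, map_prod]
      unfold vT
      apply Finset.prod_congr rfl
      intro i _
      exact MvPolynomial.aeval_X _ i

lemma card_genF_le (m r : ℕ) :
    (genF m r).card ≤ ∑ i ∈ Finset.range (r + 1), Nat.choose m i := by
  refine le_trans (Finset.card_image_le) ?_
  have : ((Finset.univ : Finset (Finset (Fin m))).filter (fun T => T.card ≤ r))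
      = (Finset.range (r + 1)).biUnion (fun i => Finset.powersetCard i Finset.univ) := by
    ext T
    simp only [Finset.mem_filter, Finset.mem_univ, true_and, Finset.mem_biUnion,
      Finset.mem_range, Finset.mem_powersetCard]
    constructor
    · intro h; exact ⟨T.card, Nat.lt_succ_of_le h, Finset.subset_univ _, rfl⟩
    · rintro ⟨i, hi, -, rfl⟩; exact Nat.lt_succ_iff.mp hi
  rw [this]
  refine le_trans (Finset.card_biUnion_le) ?_
  apply Finset.sum_le_sum
  intro i _
  rw [Finset.card_powersetCard, Finset.card_univ, Fintype.card_fin]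

lemma finrank_RM_le (m r : ℕ) :
    finrank (ZMod 2) (RM m r) ≤ ∑ i ∈ Finset.range (r + 1), Nat.choose m i := by
  rw [RM_eq_span]
  exact le_trans (finrank_span_finset_le_card (genF m r)) (card_genF_le m r)

lemma xor_lt (m : ℕ) (a b : ℕ) (ha : a < 2 ^ m) (hb : b < 2 ^ m) : a ^^^ b < 2 ^ m :=
  Nat.xor_lt_two_pow ha hb

lemma xorFin_invol (m : ℕ) (t : Fin (2 ^ m)) :
    Function.Involutive (fun s : Fin (2 ^ m) =>
      (⟨(s : ℕ) ^^^ (t : ℕ), xor_lt m _ _ s.isLt t.isLt⟩ : Fin (2 ^ m))) := by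
  intro s
  apply Fin.ext
  simp [Nat.xor_assoc]

def xorPerm (m : ℕ) (t : Fin (2 ^ m)) : Equiv.Perm (Fin (2 ^ m)) :=
  (xorFin_invol m t).toPerm _

lemma xorPerm_apply (m : ℕ) (t s : Fin (2 ^ m)) :
    ((xorPerm m t s : Fin (2 ^ m)) : ℕ) = (s : ℕ) ^^^ (t : ℕ) := rfl

lemma xorPerm_symm (m : ℕ) (t : Fin (2 ^ m)) : (xorPerm m t).symm = xorPerm m t := rfl

lemma xorPerm_invol (m : ℕ) (t : Fin (2 ^ m)) (s : Fin (2 ^ m)) :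
    xorPerm m t (xorPerm m t s) = s := xorFin_invol m t s

lemma bitRepr_xorPerm (m : ℕ) (t s : Fin (2 ^ m)) (i : Fin m) :
    bitRepr m ((xorPerm m t s : Fin (2 ^ m)) : ℕ) i = bitRepr m (s : ℕ) i + bitRepr m (t : ℕ) i := by
  unfold bitRepr
  rw [xorPerm_apply, Nat.testBit_xor]
  cases h1 : Nat.testBit (s : ℕ) (m - 1 - (i : ℕ)) <;>
    cases h2 : Nat.testBit (t : ℕ) (m - 1 - (i : ℕ)) <;> simp <;> decide

lemma vT_comp_xorPerm (m : ℕ) (t : Fin (2 ^ m)) (T : Finset (Fin m)) :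
    vT m T ∘ (xorPerm m t) =
      ∑ U ∈ T.powerset, (∏ i ∈ T \ U, bitRepr m (t : ℕ) i) • vT m U := by
  funext s
  have h1 : (vT m T ∘ (xorPerm m t)) s
      = ∏ i ∈ T, (bitRepr m (s : ℕ) i + bitRepr m (t : ℕ) i) := by
    unfold vT
    simp only [Function.comp_apply]
    exact Finset.prod_congr rfl fun i _ => bitRepr_xorPerm m t s i
  rw [h1, Finset.prod_add]
  rw [Finset.sum_apply]
  apply Finset.sum_congr rfl
  intro U _
  simp only [Pi.smul_apply, smul_eq_mul]
  unfold vT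
  ring

lemma RM_comp_xorPerm_mem (m r : ℕ) (t : Fin (2 ^ m)) (c : Fin (2 ^ m) → ZMod 2)
    (hc : c ∈ RM m r) : c ∘ (xorPerm m t) ∈ RM m r := by
  rw [RM_eq_span] at hc ⊢
  have hL : c ∘ (xorPerm m t)
      = LinearMap.funLeft (ZMod 2) (ZMod 2) (xorPerm m t) c := rfl
  rw [hL]
  have hmem : LinearMap.funLeft (ZMod 2) (ZMod 2) (xorPerm m t) c ∈
      (Submodule.span (ZMod 2) (genF m r : Set (Fin (2 ^ m) → ZMod 2))).map
        (LinearMap.funLeft (ZMod 2) (ZMod 2) (xorPerm m t)) :=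
    Submodule.mem_map_of_mem hc
  rw [Submodule.map_span] at hmem
  refine Submodule.span_le.mpr ?_ hmem
  rintro x ⟨g, hg, rfl⟩
  simp only [genF, Finset.coe_image, Set.mem_image, Finset.mem_coe, Finset.mem_filter] at hg
  obtain ⟨T, ⟨-, hT⟩, rfl⟩ := hg
  have : LinearMap.funLeft (ZMod 2) (ZMod 2) (xorPerm m t) (vT m T)
      = vT m T ∘ (xorPerm m t) := rfl
  rw [this, vT_comp_xorPerm]
  apply Submodule.sum_mem
  intro U hU
  apply Submodule.smul_mem
  apply Submodule.subset_span
  simp only [genF, Finset.coe_image, Set.mem_image, Finset.mem_coe, Finset.mem_filter]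
  exact ⟨U, ⟨Finset.mem_univ _, le_trans (Finset.card_le_card (Finset.mem_powerset.mp hU)) hT⟩, rfl⟩

lemma RM_comp_xorPerm_iff (m r : ℕ) (t : Fin (2 ^ m)) (c : Fin (2 ^ m) → ZMod 2) :
    c ∈ RM m r ↔ c ∘ (xorPerm m t) ∈ RM m r := by
  constructor
  · exact RM_comp_xorPerm_mem m r t c
  · intro h
    have h2 := RM_comp_xorPerm_mem m r t _ h
    have h3 : (c ∘ (xorPerm m t)) ∘ (xorPerm m t) = c := by
      funext j
      simp only [Function.comp_apply, xorPerm_invol]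
    rwa [h3] at h2

lemma RM_transitive (m r : ℕ) (i j : Fin (2 ^ m)) :
    ∃ σ : Equiv.Perm (Fin (2 ^ m)),
      (∀ c, c ∈ RM m r ↔ c ∘ σ ∈ RM m r) ∧ σ.symm i = j := by
  refine ⟨xorPerm m ⟨(i : ℕ) ^^^ (j : ℕ), xor_lt m _ _ i.isLt j.isLt⟩,
    fun c => RM_comp_xorPerm_iff m r _ c, ?_⟩
  rw [xorPerm_symm]
  apply Fin.ext
  rw [xorPerm_apply]
  simp only []
  rw [← Nat.xor_assoc, Nat.xor_self, Nat.zero_xor]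

section Assembly

lemma zmod2_ne_zero {x : ZMod 2} (h : x ≠ 0) : x = 1 := by
  revert h; revert x; decide

/-- Main per-m bound: any linear RLL subcode of RM(m,r) has small dimension. -/
lemma main_bound (m r d : ℕ) (π : Equiv.Perm (Fin (2 ^ m)))
    (D : Submodule (ZMod 2) (Fin (2 ^ m) → ZMod 2)) (hDRM : D ≤ RM m r)
    (hRLL : ∀ c ∈ D, RLL d (fun j : Fin (2 ^ m) => c (π j))) :
    finrank (ZMod 2) D * 2 ^ m ≤
      (2 ^ m / (d + 1) + 1) * ∑ i ∈ Finset.range (r + 1), Nat.choose m i := by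
  classical
  set S : Finset (Fin (2 ^ m)) := Finset.univ.filter (fun i => ∃ c ∈ D, c (π i) ≠ 0) with hS
  have hSmem : ∀ {i : Fin (2 ^ m)}, i ∈ S ↔ ∃ c ∈ D, c (π i) ≠ 0 := by
    intro i; simp [hS]
  -- spacing of S
  have hspaced : ∀ i j : Fin (2 ^ m), i ∈ S → j ∈ S → (i : ℕ) < (j : ℕ) →
      (j : ℕ) ≤ (i : ℕ) + d → False := by
    intro i j hi hj hlt hle
    obtain ⟨c, hc, hci⟩ := hSmem.mp hi
    obtain ⟨c', hc', hc'j⟩ := hSmem.mp hj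
    have hci1 : c (π i) = 1 := zmod2_ne_zero hci
    have hc'j1 : c' (π j) = 1 := zmod2_ne_zero hc'j
    have hcj0 : c (π j) = 0 := hRLL c hc i j hci1 hlt hle
    by_cases hc'i : c' (π i) = 0
    · have hadd : c + c' ∈ D := D.add_mem hc hc'
      have h1 : (c + c') (π i) = 1 := by
        simp [hci1, hc'i]
      have h0 : (c + c') (π j) = 0 := hRLL (c + c') hadd i j h1 hlt hle
      rw [Pi.add_apply, hcj0, hc'j1, zero_add] at h0
      exact one_ne_zero h0
    · have h5 : c' (π j) = 0 := hRLL c' hc' i j (zmod2_ne_zero hc'i) hlt hle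
      rw [h5] at hc'j1
      exact one_ne_zero hc'j1.symm
  -- cardinality of spaced set
  have hScard : S.card ≤ 2 ^ m / (d + 1) + 1 := by
    have : S.card ≤ (Finset.range (2 ^ m / (d + 1) + 1)).card := by
      apply Finset.card_le_card_of_injOn (fun i : Fin (2 ^ m) => (i : ℕ) / (d + 1))
      · intro i _
        rw [Finset.mem_coe, Finset.mem_range, Nat.lt_succ_iff]
        exact Nat.div_le_div_right (le_of_lt i.isLt)
      · intro i hi j hj hij
        by_contra hne
        have hvalne : (i : ℕ) ≠ (j : ℕ) := fun h => hne (Fin.ext h)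
        have hdi := Nat.div_add_mod (i : ℕ) (d + 1)
        have hdj := Nat.div_add_mod (j : ℕ) (d + 1)
        have hmi : (i : ℕ) % (d + 1) < d + 1 := Nat.mod_lt _ (Nat.succ_pos d)
        have hmj : (j : ℕ) % (d + 1) < d + 1 := Nat.mod_lt _ (Nat.succ_pos d)
        replace hij : (i : ℕ) / (d + 1) = (j : ℕ) / (d + 1) := hij
        rw [← hij] at hdj
        have hclose : (i : ℕ) ≤ (j : ℕ) + d ∧ (j : ℕ) ≤ (i : ℕ) + d := by
          generalize (d + 1) * ((i : ℕ) / (d + 1)) = A at hdi hdj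
          omega
        rcases Nat.lt_or_ge (i : ℕ) (j : ℕ) with hlt | hge
        · exact hspaced i j hi hj hlt (by omega)
        · have hlt : (j : ℕ) < (i : ℕ) := Nat.lt_of_le_of_ne hge (Ne.symm hvalne)
          exact hspaced j i hj hi hlt (by omega)
    simpa using this
  -- the support set in unpermuted coordinates
  set P : Finset (Fin (2 ^ m)) := S.image π with hP
  have hPcard : P.card = S.card := Finset.card_image_of_injective _ (Equiv.injective _)
  -- D is contained in the shortened code
  have hDshort : D ≤ RM m r ⊓ LinearMap.ker (prj Pᶜ) := by
    intro c hc
    refine Submodule.mem_inf.mpr ⟨hDRM hc, ?_⟩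
    rw [LinearMap.mem_ker]
    funext j
    rw [prj_apply]
    split
    · next hjc =>
      by_contra hne
      have hmem : (π.symm j) ∈ S := by
        rw [hSmem]
        exact ⟨c, hc, by rwa [Equiv.apply_symm_apply]⟩
      have : j ∈ P := by
        rw [hP]
        refine Finset.mem_image.mpr ⟨π.symm j, hmem, Equiv.apply_symm_apply _ _⟩
      rw [Finset.mem_compl] at hjc
      exact hjc this
    · rfl
  have hk : finrank (ZMod 2) D ≤
      finrank (ZMod 2) (RM m r ⊓ LinearMap.ker (prj Pᶜ) : Submodule (ZMod 2) (Fin (2 ^ m) → ZMod 2)) :=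
    Submodule.finrank_mono hDshort
  -- rank-nullity
  have hRN := finrank_map_add_inf_ker (RM m r) (prj Pᶜ (F := ZMod 2))
  -- density bound
  have hdens := rk_density (RM m r) (fun i j => RM_transitive m r i j) Pᶜ
  have hrkuniv : rk (RM m r) Finset.univ = finrank (ZMod 2) (RM m r) := by
    unfold rk
    rw [prj_univ, Submodule.map_id]
  rw [hrkuniv] at hdens
  set a := finrank (ZMod 2) (RM m r) with ha
  set b := rk (RM m r) Pᶜ with hb
  have hab : b + finrank (ZMod 2)
      (RM m r ⊓ LinearMap.ker (prj Pᶜ) : Submodule (ZMod 2) (Fin (2 ^ m) → ZMod 2)) = a := hRN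
  have hPc : Pᶜ.card = 2 ^ m - P.card := by
    rw [Finset.card_compl]
    simp
  have hPle : P.card ≤ 2 ^ m := by
    calc P.card ≤ Fintype.card (Fin (2 ^ m)) := Finset.card_le_univ P
    _ = 2 ^ m := Fintype.card_fin _
  -- 2^m * finrank D ≤ P.card * a
  have hmain : 2 ^ m * finrank (ZMod 2) D ≤ P.card * a := by
    have h1 : 2 ^ m * finrank (ZMod 2) D + 2 ^ m * b ≤ 2 ^ m * a := by
      calc 2 ^ m * finrank (ZMod 2) D + 2 ^ m * b
          ≤ 2 ^ m * (finrank (ZMod 2)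
              (RM m r ⊓ LinearMap.ker (prj Pᶜ) : Submodule (ZMod 2) (Fin (2 ^ m) → ZMod 2))) + 2 ^ m * b :=
            Nat.add_le_add_right (Nat.mul_le_mul_left _ hk) _
        _ = 2 ^ m * a := by rw [← Nat.mul_add, Nat.add_comm, hab]
    have h2 : Pᶜ.card * a ≤ 2 ^ m * b := hdens
    have h3 : 2 ^ m * finrank (ZMod 2) D + Pᶜ.card * a ≤ 2 ^ m * a := le_trans (Nat.add_le_add_left h2 _) h1
    have h4 : 2 ^ m * a = P.card * a + Pᶜ.card * a := by
      rw [← Nat.add_mul]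
      congr 1
      omega
    omega
  -- conclude
  have haC : a ≤ ∑ i ∈ Finset.range (r + 1), Nat.choose m i := finrank_RM_le m r
  calc finrank (ZMod 2) D * 2 ^ m = 2 ^ m * finrank (ZMod 2) D := Nat.mul_comm _ _
    _ ≤ P.card * a := hmain
    _ ≤ (2 ^ m / (d + 1) + 1) * a := Nat.mul_le_mul_right _ (by omega)
    _ ≤ (2 ^ m / (d + 1) + 1) * ∑ i ∈ Finset.range (r + 1), Nat.choose m i :=
        Nat.mul_le_mul_left _ haC

end Assembly

/-- If C(m,≤r_m)/2^m → R ∈ (0,1), (π_m) is a sequence of Gray permutations,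
and L_m is the maximum dimension of a linear subspace D of RM(m,r_m) such that every
codeword of D, reordered by π_m, satisfies the (d,∞)-RLL constraint,
then limsup L_m/2^m ≤ R/(d+1). -/
theorem stmt5 (R : ℝ) (hR : R ∈ Set.Ioo (0 : ℝ) 1) (d : ℕ) (hd : 1 ≤ d) (r : ℕ → ℕ)
    (hlim : Filter.Tendsto
      (fun m : ℕ => (∑ i ∈ Finset.range (r m + 1), (m.choose i : ℝ)) / 2 ^ m)
      Filter.atTop (nhds R))
    (π : (m : ℕ) → Equiv.Perm (Fin (2 ^ m))) (hπ : ∀ m : ℕ, 1 ≤ m → IsGray m (π m)) :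
    Filter.limsup
      (fun m : ℕ =>
        ((sSup {k : ℕ | ∃ D : Submodule (ZMod 2) (Fin (2 ^ m) → ZMod 2),
            D ≤ RM m (r m) ∧ (∀ c ∈ D, RLL d (fun j : Fin (2 ^ m) => c (π m j))) ∧
            Module.finrank (ZMod 2) D = k} : ℕ) : ℝ) / 2 ^ m)
      Filter.atTop ≤ R / (d + 1) := by
  classical
  set f : ℕ → ℝ := fun m : ℕ =>
        ((sSup {k : ℕ | ∃ D : Submodule (ZMod 2) (Fin (2 ^ m) → ZMod 2),
            D ≤ RM m (r m) ∧ (∀ c ∈ D, RLL d (fun j : Fin (2 ^ m) => c (π m j))) ∧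
            Module.finrank (ZMod 2) D = k} : ℕ) : ℝ) / 2 ^ m with hf
  set u : ℕ → ℝ := fun m : ℕ =>
      ((∑ i ∈ Finset.range (r m + 1), (m.choose i : ℝ)) / 2 ^ m) *
        (1 / ((d : ℝ) + 1) + 1 / 2 ^ m) with hu
  have key : ∀ m : ℕ, f m ≤ u m := by
    intro m
    set A : Set ℕ := {k : ℕ | ∃ D : Submodule (ZMod 2) (Fin (2 ^ m) → ZMod 2),
            D ≤ RM m (r m) ∧ (∀ c ∈ D, RLL d (fun j : Fin (2 ^ m) => c (π m j))) ∧
            Module.finrank (ZMod 2) D = k} with hA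
    have h0 : 0 ∈ A := by
      refine ⟨⊥, bot_le, ?_, finrank_bot _ _⟩
      intro c hc
      rw [Submodule.mem_bot] at hc
      subst hc
      intro i j h1 _ _
      simp only [Pi.zero_apply] at h1
      exact absurd h1 zero_ne_one
    have hbdd : BddAbove A := by
      refine ⟨2 ^ m, ?_⟩
      rintro k ⟨D, -, -, hk⟩
      rw [← hk]
      calc finrank (ZMod 2) D ≤ finrank (ZMod 2) (Fin (2 ^ m) → ZMod 2) := Submodule.finrank_le D
        _ = 2 ^ m := by rw [Module.finrank_pi, Fintype.card_fin]
    obtain ⟨D, hDRM, hRLL, hDfr⟩ := Nat.sSup_mem ⟨0, h0⟩ hbdd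
    have hnat := main_bound m (r m) d (π m) D hDRM hRLL
    rw [hDfr] at hnat
    have h2m : (0 : ℝ) < 2 ^ m := by positivity
    have hCnn : (0 : ℝ) ≤ ∑ i ∈ Finset.range (r m + 1), (m.choose i : ℝ) :=
      Finset.sum_nonneg fun i _ => by positivity
    have hcast : ((sSup A : ℕ) : ℝ) * 2 ^ m ≤
        ((2 ^ m / (d + 1) + 1 : ℕ) : ℝ) * ∑ i ∈ Finset.range (r m + 1), (m.choose i : ℝ) := by
      push_cast
      exact_mod_cast hnat
    have hB : ((2 ^ m / (d + 1) + 1 : ℕ) : ℝ) ≤ (2 : ℝ) ^ m / ((d : ℝ) + 1) + 1 := by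
      push_cast
      have := Nat.cast_div_le (α := ℝ) (m := 2 ^ m) (n := d + 1)
      push_cast at this
      linarith
    have hstep1 : f m ≤ ((2 ^ m / (d + 1) + 1 : ℕ) : ℝ) *
        (∑ i ∈ Finset.range (r m + 1), (m.choose i : ℝ)) / (2 ^ m * 2 ^ m) := by
      rw [hf]
      simp only
      rw [div_le_div_iff₀ h2m (by positivity)]
      calc ((sSup A : ℕ) : ℝ) * (2 ^ m * 2 ^ m)
          = (((sSup A : ℕ) : ℝ) * 2 ^ m) * 2 ^ m := by ring
        _ ≤ (((2 ^ m / (d + 1) + 1 : ℕ) : ℝ) *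
              ∑ i ∈ Finset.range (r m + 1), (m.choose i : ℝ)) * 2 ^ m := by
            exact mul_le_mul_of_nonneg_right hcast (le_of_lt h2m)
        _ = ((2 ^ m / (d + 1) + 1 : ℕ) : ℝ) *
              (∑ i ∈ Finset.range (r m + 1), (m.choose i : ℝ)) * 2 ^ m := by ring
    have hstep2 : ((2 ^ m / (d + 1) + 1 : ℕ) : ℝ) *
        (∑ i ∈ Finset.range (r m + 1), (m.choose i : ℝ)) / (2 ^ m * 2 ^ m) ≤ u m := by
      rw [hu]
      simp only
      have hre : ((∑ i ∈ Finset.range (r m + 1), (m.choose i : ℝ)) / 2 ^ m) *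
          (1 / ((d : ℝ) + 1) + 1 / 2 ^ m)
          = ((2 : ℝ) ^ m / ((d : ℝ) + 1) + 1) *
            (∑ i ∈ Finset.range (r m + 1), (m.choose i : ℝ)) / (2 ^ m * 2 ^ m) := by
        have hd1 : ((d : ℝ) + 1) ≠ 0 := by positivity
        field_simp
      rw [hre]
      apply div_le_div_of_nonneg_right ?_ (by positivity)
      exact mul_le_mul_of_nonneg_right hB hCnn
    exact le_trans hstep1 hstep2
  -- limits
  have hhalf : Filter.Tendsto (fun m : ℕ => (1 : ℝ) / 2 ^ m) Filter.atTop (nhds 0) := by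
    have h := tendsto_pow_atTop_nhds_zero_of_lt_one
      (by norm_num : (0 : ℝ) ≤ 1 / 2) (by norm_num : (1 : ℝ) / 2 < 1)
    convert h using 2 with m
    rw [div_pow, one_pow]
  have hutend : Filter.Tendsto u Filter.atTop (nhds (R * (1 / ((d : ℝ) + 1) + 0))) :=
    hlim.mul (Filter.Tendsto.add tendsto_const_nhds hhalf)
  have hR' : R * (1 / ((d : ℝ) + 1) + 0) = R / ((d : ℝ) + 1) := by
    rw [add_zero, mul_one_div]
  rw [hR'] at hutend
  have hfu : f ≤ᶠ[Filter.atTop] u := Filter.Eventually.of_forall key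
  have hcob : Filter.IsCoboundedUnder (· ≤ ·) Filter.atTop f := by
    apply Filter.isCoboundedUnder_le_of_eventually_le (x := 0) Filter.atTop
    apply Filter.Eventually.of_forall
    intro m
    rw [hf]
    positivity
  have hbd : Filter.IsBoundedUnder (· ≤ ·) Filter.atTop u := hutend.isBoundedUnder_le
  calc Filter.limsup f Filter.atTop ≤ Filter.limsup u Filter.atTop :=
        Filter.limsup_le_limsup hfu hcob hbd
    _ = R / ((d : ℝ) + 1) := hutend.limsup_eq
end

section
/- Let C ⊆ F₂^N be an F₂-linear code of dimension K, and let I ⊆ {0,…,N−1} be an information set of C. Suppose I contains t pairwise disjoint (d+1)-tuples of consecutive coordinates {i_1, i_1+1, …, i_1+d}, {i_2, i_2+1, …, i_2+d}, …, {i_t, i_t+1, …, i_t+d}, with i_1 ≥ 0, i_j > i_{j−1} + d for all j ∈ {2,…,t}, and i_t ≤ N−1−d. Then every F₂-linear subcode of C all of whose codewords satisfy the (d,∞)-RLL constraint has dimension at most K − d·t. -/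
/-- Let C ⊆ F₂^N be a linear code of dimension K with information set I
(a set of K coordinates on which the restriction map is a bijection). If I contains t
pairwise disjoint (d+1)-tuples of consecutive coordinates, then every linear subcode of C
all of whose codewords satisfy the (d,∞)-RLL constraint has dimension at most K − d·t. -/
theorem stmt7 (N K d t : ℕ) (hd : 1 ≤ d)
    (C : Submodule (ZMod 2) (Fin N → ZMod 2))
    (hK : Module.finrank (ZMod 2) C = K)
    (I : Finset (Fin N)) (hIcard : I.card = K)
    (hinfo : Function.Bijective
      (fun c : C => fun i : {i : Fin N // i ∈ I} => (c : Fin N → ZMod 2) i.val))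
    (idx : Fin t → ℕ)
    (hgap : ∀ j k : Fin t, j < k → idx j + d < idx k)
    (hlast : ∀ j : Fin t, idx j + d ≤ N - 1)
    (hmem : ∀ j : Fin t, ∀ k : ℕ, k ≤ d → ∀ h : idx j + k < N, (⟨idx j + k, h⟩ : Fin N) ∈ I)
    (D : Submodule (ZMod 2) (Fin N → ZMod 2)) (hDC : D ≤ C)
    (hRLL : ∀ c ∈ D, RLL d c) :
    (Module.finrank (ZMod 2) D : ℤ) ≤ (K : ℤ) - d * t := by
  classical
  -- All block coordinates are legal indices.
  have hNlt : ∀ (j : Fin t) (k : ℕ), k ≤ d → idx j + k < N := by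
    intro j k hk
    have h1 := hlast j
    omega
  -- The coordinates of `I` outside all blocks.
  set J : Finset (Fin N) :=
    I.filter (fun i => ∀ j : Fin t, ¬ (idx j ≤ (i : ℕ) ∧ (i : ℕ) ≤ idx j + d)) with hJ
  -- The set of block coordinates.
  set B : Finset (Fin N) :=
    Finset.image (fun p : Fin t × Fin (d + 1) =>
      (⟨idx p.1 + (p.2 : ℕ), hNlt p.1 p.2 (Nat.lt_succ_iff.mp p.2.isLt)⟩ : Fin N))
      Finset.univ with hB
  -- The block map is injective.
  have hbinj : Function.Injective (fun p : Fin t × Fin (d + 1) =>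
      (⟨idx p.1 + (p.2 : ℕ), hNlt p.1 p.2 (Nat.lt_succ_iff.mp p.2.isLt)⟩ : Fin N)) := by
    rintro ⟨j1, k1⟩ ⟨j2, k2⟩ h
    have hval : idx j1 + (k1 : ℕ) = idx j2 + (k2 : ℕ) := congrArg Fin.val h
    have hk1 : (k1 : ℕ) ≤ d := Nat.lt_succ_iff.mp k1.isLt
    have hk2 : (k2 : ℕ) ≤ d := Nat.lt_succ_iff.mp k2.isLt
    have hj : j1 = j2 := by
      rcases lt_trichotomy j1 j2 with hlt | heq | hgt
      · have := hgap j1 j2 hlt; omega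
      · exact heq
      · have := hgap j2 j1 hgt; omega
    subst hj
    have : (k1 : ℕ) = (k2 : ℕ) := by omega
    exact Prod.ext rfl (Fin.ext this)
  have hBcard : B.card = t * (d + 1) := by
    rw [hB, Finset.card_image_of_injective _ hbinj, Finset.card_univ, Fintype.card_prod,
      Fintype.card_fin, Fintype.card_fin]
  have hBI : B ⊆ I := by
    intro i hi
    rw [hB, Finset.mem_image] at hi
    obtain ⟨⟨j, k⟩, -, rfl⟩ := hi
    exact hmem j k (Nat.lt_succ_iff.mp k.isLt) _
  have hdisj : Disjoint J B := by
    rw [Finset.disjoint_left]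
    intro i hiJ hiB
    rw [hJ, Finset.mem_filter] at hiJ
    rw [hB, Finset.mem_image] at hiB
    obtain ⟨⟨j, k⟩, -, rfl⟩ := hiB
    exact hiJ.2 j ⟨Nat.le_add_right _ _,
      Nat.add_le_add_left (Nat.lt_succ_iff.mp k.isLt) _⟩
  have hcards : J.card + t * (d + 1) ≤ K := by
    have hsub : J ∪ B ⊆ I := by
      apply Finset.union_subset _ hBI
      intro i hi
      rw [hJ, Finset.mem_filter] at hi
      exact hi.1
    have := Finset.card_le_card hsub
    rw [Finset.card_union_of_disjoint hdisj, hBcard, hIcard] at this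
    exact this
  -- The key linear map.
  let F : D →ₗ[ZMod 2] ((↥J → ZMod 2) × (Fin t → ZMod 2)) :=
    { toFun := fun c =>
        (fun i => (c : Fin N → ZMod 2) i.val,
         fun j => ∑ k : Fin (d + 1),
           (c : Fin N → ZMod 2) ⟨idx j + (k : ℕ), hNlt j k (Nat.lt_succ_iff.mp k.isLt)⟩)
      map_add' := by
        intro a b
        refine Prod.ext ?_ ?_
        · funext i; rfl
        · funext j
          simp [Finset.sum_add_distrib]
      map_smul' := by
        intro m a
        refine Prod.ext ?_ ?_
        · funext i; rfl
        · funext j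
          simp [Finset.mul_sum] }
  -- In ZMod 2, nonzero means one.
  have hzmod : ∀ a : ZMod 2, a ≠ 0 → a = 1 := by decide
  -- F is injective.
  have hFinj : Function.Injective F := by
    rw [← LinearMap.ker_eq_bot]
    apply LinearMap.ker_eq_bot'.mpr
    intro c hc
    have hc1 : ∀ i : ↥J, (c : Fin N → ZMod 2) i.val = 0 := by
      intro i
      have := congrArg (fun p => p.1 i) hc
      exact this
    have hc2 : ∀ j : Fin t, (∑ k : Fin (d + 1),
        (c : Fin N → ZMod 2) ⟨idx j + (k : ℕ), hNlt j k (Nat.lt_succ_iff.mp k.isLt)⟩) = 0 := by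
      intro j
      have := congrArg (fun p => p.2 j) hc
      exact this
    -- Every block coordinate of c vanishes.
    have hblock : ∀ (j : Fin t) (k : Fin (d + 1)),
        (c : Fin N → ZMod 2) ⟨idx j + (k : ℕ), hNlt j k (Nat.lt_succ_iff.mp k.isLt)⟩ = 0 := by
      intro j k
      by_contra hne
      have hone := hzmod _ hne
      have hrll := hRLL (c : Fin N → ZMod 2) c.2
      -- all other coordinates in the block are zero
      have hothers : ∀ k' : Fin (d + 1), k' ≠ k →
          (c : Fin N → ZMod 2) ⟨idx j + (k' : ℕ), hNlt j k' (Nat.lt_succ_iff.mp k'.isLt)⟩ = 0 := by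
        intro k' hk'
        have hkd : (k : ℕ) ≤ d := Nat.lt_succ_iff.mp k.isLt
        have hk'd : (k' : ℕ) ≤ d := Nat.lt_succ_iff.mp k'.isLt
        have hne' : (k' : ℕ) ≠ (k : ℕ) := fun h => hk' (Fin.ext h)
        rcases Nat.lt_or_ge (k : ℕ) (k' : ℕ) with hlt | hge
        · exact hrll ⟨idx j + (k : ℕ), hNlt j k hkd⟩ ⟨idx j + (k' : ℕ), hNlt j k' hk'd⟩
            hone (by simp; omega) (by simp; omega)
        · have hlt : (k' : ℕ) < (k : ℕ) := lt_of_le_of_ne hge hne'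
          by_contra hne2
          have hone2 := hzmod _ hne2
          have := hrll ⟨idx j + (k' : ℕ), hNlt j k' hk'd⟩ ⟨idx j + (k : ℕ), hNlt j k hkd⟩
            hone2 (by simp; omega) (by simp; omega)
          rw [this] at hone
          exact one_ne_zero hone.symm
      have hsum := hc2 j
      rw [Finset.sum_eq_single_of_mem k (Finset.mem_univ k)
        (fun b _ hb => hothers b hb)] at hsum
      rw [hone] at hsum
      exact one_ne_zero hsum
    -- c vanishes on all of I.
    have hIzero : ∀ i : Fin N, i ∈ I → (c : Fin N → ZMod 2) i = 0 := by
      intro i hi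
      by_cases hcase : ∀ j : Fin t, ¬ (idx j ≤ (i : ℕ) ∧ (i : ℕ) ≤ idx j + d)
      · exact hc1 ⟨i, by rw [hJ, Finset.mem_filter]; exact ⟨hi, hcase⟩⟩
      · push_neg at hcase
        obtain ⟨j, hj1, hj2⟩ := hcase
        have hkd : (i : ℕ) - idx j ≤ d := by omega
        have := hblock j ⟨(i : ℕ) - idx j, Nat.lt_succ_iff.mpr hkd⟩
        have heq : (⟨idx j + ((i : ℕ) - idx j), hNlt j _ hkd⟩ : Fin N) = i := by
          apply Fin.ext; simp; omega
        rwa [heq] at this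
    -- use injectivity of the information-set projection
    have hcC : (c : Fin N → ZMod 2) ∈ C := hDC c.2
    have hproj : (fun i : {i : Fin N // i ∈ I} => ((⟨(c : Fin N → ZMod 2), hcC⟩ : C) :
        Fin N → ZMod 2) i.val) = (fun i : {i : Fin N // i ∈ I} => ((0 : C) :
        Fin N → ZMod 2) i.val) := by
      funext i
      simp [hIzero i.val i.property]
    have := hinfo.1 hproj
    have hczero : (c : Fin N → ZMod 2) = 0 := by
      have := congrArg (fun x : C => (x : Fin N → ZMod 2)) this
      simpa using this
    exact Subtype.ext hczero
  -- finrank bound from the injective linear map.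
  have hfin : Module.finrank (ZMod 2) D ≤
      Module.finrank (ZMod 2) ((↥J → ZMod 2) × (Fin t → ZMod 2)) :=
    LinearMap.finrank_le_finrank_of_injective hFinj
  have hrank : Module.finrank (ZMod 2) ((↥J → ZMod 2) × (Fin t → ZMod 2)) = J.card + t := by
    rw [Module.finrank_prod, Module.finrank_pi, Module.finrank_pi, Fintype.card_coe,
      Fintype.card_fin]
  rw [hrank] at hfin
  have key : Module.finrank (ZMod 2) D + d * t ≤ K := by
    calc Module.finrank (ZMod 2) D + d * t ≤ (J.card + t) + d * t :=
          Nat.add_le_add_right hfin _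
      _ = J.card + t * (d + 1) := by ring
      _ ≤ K := hcards
  have key' : (Module.finrank (ZMod 2) D : ℤ) + (d : ℤ) * (t : ℤ) ≤ (K : ℤ) := by
    exact_mod_cast key
  linarith
end

section
/- Let m ≥ 1 and 0 ≤ r ≤ m be integers. In F₂^{2^m}, the F₂-linear span of the set {Eval(∏_{i∈S} x_i) : S ⊆ {1,…,m}, |S| ≥ r+1} of evaluation vectors of monomials of degree at least r+1 equals the F₂-linear span of the set {e_b : b ∈ F₂^m, wt(b) ≥ r+1} of standard basis vectors, where e_b is the vector with a 1 in the coordinate indexed by the evaluation point b and 0s elsewhere, and wt(b) is the Hamming weight of b. -/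
/-- Hamming weight of a point b ∈ F₂^m. -/
def wtF {m : ℕ} (b : Fin m → ZMod 2) : ℕ := (Finset.univ.filter fun j => b j = 1).card

lemma zmod2_cases (x : ZMod 2) : x = 0 ∨ x = 1 := by revert x; decide

lemma bitRepr_inj {m : ℕ} {s t : Fin (2 ^ m)}
    (h : bitRepr m (s : ℕ) = bitRepr m (t : ℕ)) : s = t := by
  apply Fin.ext
  apply Nat.eq_of_testBit_eq
  intro i
  by_cases hi : i < m
  · have := congrFun h ⟨m - 1 - i, by omega⟩
    simp only [bitRepr] at this
    have hidx : m - 1 - (m - 1 - i) = i := by omega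
    rw [hidx] at this
    by_cases hb : Nat.testBit (s : ℕ) i <;> by_cases hc : Nat.testBit (t : ℕ) i <;>
      simp_all
  · have hs : (s : ℕ) < 2 ^ i := lt_of_lt_of_le s.2 (Nat.pow_le_pow_right (by norm_num) (by omega))
    have ht : (t : ℕ) < 2 ^ i := lt_of_lt_of_le t.2 (Nat.pow_le_pow_right (by norm_num) (by omega))
    rw [Nat.testBit_lt_two_pow hs, Nat.testBit_lt_two_pow ht]

lemma evalRM_prod_X (m : ℕ) (S : Finset (Fin m)) (s : Fin (2 ^ m)) :
    evalRM m (∏ i ∈ S, MvPolynomial.X i) s = ∏ i ∈ S, bitRepr m (s : ℕ) i := by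
  simp [evalRM]

/-- A monomial evaluation vector is the sum of the standard basis vectors over the points
whose support contains S. -/
lemma monomial_eval_eq_sum (m : ℕ) (S : Finset (Fin m)) :
    evalRM m (∏ i ∈ S, MvPolynomial.X i) =
      ∑ t ∈ Finset.univ.filter (fun t : Fin (2 ^ m) => ∀ i ∈ S, bitRepr m (t : ℕ) i = 1),
        Pi.single t 1 := by
  funext u
  rw [Finset.sum_apply]
  simp only [Pi.single_apply]
  rw [Finset.sum_ite_eq (Finset.univ.filter _) u (fun _ => (1 : ZMod 2))]
  rw [evalRM_prod_X]
  by_cases hu : ∀ i ∈ S, bitRepr m (u : ℕ) i = 1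
  · rw [if_pos (by simpa using hu), Finset.prod_eq_one hu]
  · rw [if_neg (by simp [hu])]
    push_neg at hu
    obtain ⟨i, hiS, hi⟩ := hu
    have : bitRepr m (u : ℕ) i = 0 := (zmod2_cases _).resolve_right hi
    exact Finset.prod_eq_zero hiS this

/-- A standard basis vector is the sum of monomial evaluation vectors over monomials containing
the support of the point. -/
lemma single_eq_sum (m : ℕ) (s : Fin (2 ^ m)) :
    (Pi.single s 1 : Fin (2 ^ m) → ZMod 2) =
      ∑ T ∈ (Finset.univ.filter fun j => bitRepr m (s : ℕ) j = 1)ᶜ.powerset,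
        evalRM m (∏ i ∈ (Finset.univ.filter fun j => bitRepr m (s : ℕ) j = 1) ∪ T,
          MvPolynomial.X i) := by
  set B := Finset.univ.filter fun j => bitRepr m (s : ℕ) j = 1 with hB
  funext u
  rw [Finset.sum_apply]
  set z := bitRepr m (u : ℕ) with hz
  have key : ∀ T ∈ Bᶜ.powerset, evalRM m (∏ i ∈ B ∪ T, MvPolynomial.X i) u =
      (∏ i ∈ B, z i) * ∏ i ∈ T, z i := by
    intro T hT
    rw [evalRM_prod_X, Finset.prod_union]
    exact Finset.disjoint_left.mpr fun a ha hb =>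
      (Finset.mem_compl.mp (Finset.mem_powerset.mp hT hb)) ha
  rw [Finset.sum_congr rfl key, ← Finset.mul_sum]
  have hps : ∑ T ∈ Bᶜ.powerset, ∏ i ∈ T, z i = ∏ i ∈ Bᶜ, (z i + 1) := by
    rw [Finset.prod_add]
    apply Finset.sum_congr rfl
    intro T hT
    simp
  rw [hps]
  by_cases hus : u = s
  · subst hus
    rw [Pi.single_eq_same]
    have h1 : ∏ i ∈ B, z i = 1 := Finset.prod_eq_one fun i hi => (Finset.mem_filter.mp hi).2
    have h2 : ∏ i ∈ Bᶜ, (z i + 1) = 1 := Finset.prod_eq_one fun i hi => by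
      have : z i = 0 := (zmod2_cases _).resolve_right
        (fun h => (Finset.mem_compl.mp hi) (Finset.mem_filter.mpr ⟨Finset.mem_univ i, h⟩))
      rw [this]; ring
    rw [h1, h2]; ring
  · rw [Pi.single_eq_of_ne hus]
    have hne : z ≠ bitRepr m (s : ℕ) := fun h => hus (bitRepr_inj h)
    obtain ⟨i, hi⟩ := Function.ne_iff.mp hne
    by_cases hib : i ∈ B
    · have hsi : bitRepr m (s : ℕ) i = 1 := (Finset.mem_filter.mp hib).2
      have : z i = 0 := (zmod2_cases _).resolve_right (fun h => hi (h.trans hsi.symm))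
      rw [Finset.prod_eq_zero hib this, zero_mul]
    · have hsi : bitRepr m (s : ℕ) i = 0 := (zmod2_cases _).resolve_right
        (fun h => hib (Finset.mem_filter.mpr ⟨Finset.mem_univ i, h⟩))
      have hzi : z i = 1 := (zmod2_cases _).resolve_left (fun h => hi (h.trans hsi.symm))
      have : z i + 1 = 0 := by rw [hzi]; decide
      rw [Finset.prod_eq_zero (Finset.mem_compl.mpr hib) this, mul_zero]

/-- In F₂^{2^m}, the span of the evaluation vectors of the monomials
∏_{i∈S} x_i with |S| ≥ r+1 equals the span of the standard basis vectors e_b indexed by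
evaluation points b of Hamming weight ≥ r+1. -/
theorem stmt8 (m r : ℕ) (hm : 1 ≤ m) (hr : r ≤ m) :
    Submodule.span (ZMod 2)
        {c : Fin (2 ^ m) → ZMod 2 | ∃ S : Finset (Fin m), r + 1 ≤ S.card ∧
          c = evalRM m (∏ i ∈ S, MvPolynomial.X i)} =
      Submodule.span (ZMod 2)
        {c : Fin (2 ^ m) → ZMod 2 | ∃ s : Fin (2 ^ m), r + 1 ≤ wtF (bitRepr m (s : ℕ)) ∧
          c = Pi.single s 1} := by
  apply le_antisymm
  · rw [Submodule.span_le]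
    rintro c ⟨S, hS, rfl⟩
    rw [SetLike.mem_coe, monomial_eval_eq_sum]
    apply Submodule.sum_mem
    intro t ht
    apply Submodule.subset_span
    refine ⟨t, ?_, rfl⟩
    refine hS.trans (Finset.card_le_card ?_)
    intro i hiS
    exact Finset.mem_filter.mpr ⟨Finset.mem_univ i, (Finset.mem_filter.mp ht).2 i hiS⟩
  · rw [Submodule.span_le]
    rintro c ⟨s, hs, rfl⟩
    rw [SetLike.mem_coe, single_eq_sum]
    apply Submodule.sum_mem
    intro T hT
    apply Submodule.subset_span
    refine ⟨_, ?_, rfl⟩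
    exact hs.trans (Finset.card_le_card Finset.subset_union_left)
end

section
/- Let m ≥ 1 and 0 ≤ r ≤ m−1 be integers. Then the number of integers s with 0 ≤ s ≤ 2^m − 2 such that wt_m(s) ≤ r and wt_m(s+1) ≥ r+1 equals the binomial coefficient C(m−1, r). -/
/-- Number of 1s in the m-bit binary representation of s. -/
def wtN (m s : ℕ) : ℕ := ((Finset.range m).filter fun j => s.testBit j).card

lemma wtN_as_sum (m s : ℕ) :
    wtN m s = ∑ j ∈ Finset.range m, if s.testBit j then 1 else 0 := by
  rw [wtN, Finset.card_filter]

lemma wtN_succ (n s : ℕ) :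
    wtN (n + 1) s = wtN n (s / 2) + (if s.testBit 0 then 1 else 0) := by
  rw [wtN_as_sum, wtN_as_sum, Finset.sum_range_succ']
  simp [Nat.testBit_succ]

lemma wtN_two_mul (n t : ℕ) : wtN (n + 1) (2 * t) = wtN n t := by
  have h0 : (2 * t).testBit 0 = false := by
    simp [Nat.testBit_zero]
  rw [wtN_succ, h0]
  simp [Nat.mul_div_cancel_left _ (by norm_num : (0:ℕ) < 2)]

lemma wtN_two_mul_add_one (n t : ℕ) : wtN (n + 1) (2 * t + 1) = wtN n t + 1 := by
  have h0 : (2 * t + 1).testBit 0 = true := by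
    simp [Nat.testBit_zero]
  have h2 : (2 * t + 1) / 2 = t := by omega
  rw [wtN_succ, h0, h2]
  simp

lemma wtN_zero_left (s : ℕ) : wtN 0 s = 0 := by simp [wtN]

/-- wt(s+1) ≤ wt(s)+1 always, and ≤ wt(s) when s is odd. -/
lemma wtN_succ_le (s : ℕ) : ∀ m, wtN m (s + 1) ≤ wtN m s + 1 ∧
    (s % 2 = 1 → wtN m (s + 1) ≤ wtN m s) := by
  induction s using Nat.strong_induction_on with
  | _ s ih =>
    intro m
    rcases m with _ | n
    · simp [wtN_zero_left]
    rcases Nat.even_or_odd s with ⟨t, ht⟩ | ⟨t, ht⟩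
    · subst ht
      constructor
      · rw [show t + t = 2 * t by ring, show 2 * t + 1 = 2 * t + 1 from rfl,
          wtN_two_mul, wtN_two_mul_add_one]
      · intro h; omega
    · subst ht
      have ht' : t < 2 * t + 1 := by omega
      constructor
      · have := (ih t ht' n).1
        rw [show 2 * t + 1 + 1 = 2 * (t + 1) by ring, wtN_two_mul, wtN_two_mul_add_one]
        omega
      · intro _
        have := (ih t ht' n).1
        rw [show 2 * t + 1 + 1 = 2 * (t + 1) by ring, wtN_two_mul, wtN_two_mul_add_one]
        omega

/-- Counting lemma: the number of t < 2^n with wt_n(t) = r is C(n,r). -/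
lemma count_wt (n : ℕ) : ∀ r, ((Finset.range (2 ^ n)).filter fun t => wtN n t = r).card
    = n.choose r := by
  induction n with
  | zero =>
    intro r
    rcases r with _ | r <;> simp [wtN_zero_left]
  | succ n ih =>
    intro r
    have hsplit : (Finset.range (2 ^ (n + 1))).filter (fun t => wtN (n + 1) t = r) =
        (((Finset.range (2 ^ n)).filter fun t => wtN n t = r).image (fun t => 2 * t)) ∪
        (((Finset.range (2 ^ n)).filter fun t => wtN n t + 1 = r).image (fun t => 2 * t + 1)) := by
      ext s
      simp only [Finset.mem_union, Finset.mem_image, Finset.mem_filter, Finset.mem_range]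
      constructor
      · rintro ⟨hs, hwt⟩
        rcases Nat.even_or_odd s with ⟨t, ht⟩ | ⟨t, ht⟩
        · left
          refine ⟨t, ⟨?_, ?_⟩, by omega⟩
          · have : 2 ^ (n + 1) = 2 * 2 ^ n := by ring
            omega
          · rw [show s = 2 * t by omega] at hwt
            rwa [wtN_two_mul] at hwt
        · right
          refine ⟨t, ⟨?_, ?_⟩, by omega⟩
          · have : 2 ^ (n + 1) = 2 * 2 ^ n := by ring
            omega
          · rw [show s = 2 * t + 1 by omega] at hwt
            rwa [wtN_two_mul_add_one] at hwt
      · rintro (⟨t, ⟨ht, hwt⟩, rfl⟩ | ⟨t, ⟨ht, hwt⟩, rfl⟩)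
        · refine ⟨?_, by rw [wtN_two_mul]; exact hwt⟩
          have h2 : 2 ^ (n + 1) = 2 * 2 ^ n := by ring
          omega
        · refine ⟨?_, by rw [wtN_two_mul_add_one]; exact hwt⟩
          have h2 : 2 ^ (n + 1) = 2 * 2 ^ n := by ring
          omega
    rw [hsplit, Finset.card_union_of_disjoint, Finset.card_image_of_injective _
        (by intro a b h; simp only at h; omega), Finset.card_image_of_injective _ (by intro a b h; simp only at h; omega)]
    · rcases r with _ | r
      · simp [ih]
      · have h1 : ((Finset.range (2 ^ n)).filter fun t => wtN n t + 1 = r + 1) =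
            ((Finset.range (2 ^ n)).filter fun t => wtN n t = r) := by
          apply Finset.filter_congr; intro x _; simp
        rw [h1, ih, ih, Nat.choose_succ_succ, Nat.add_comm]
    · rw [Finset.disjoint_left]
      intro a ha hb
      simp only [Finset.mem_image, Finset.mem_filter] at ha hb
      obtain ⟨t, _, rfl⟩ := ha
      obtain ⟨u, _, hu⟩ := hb
      omega

/-- For 1 ≤ m and 0 ≤ r ≤ m−1, the number of integers s ∈ [0, 2^m − 2] with
wt_m(s) ≤ r and wt_m(s+1) ≥ r+1 equals C(m−1, r). -/
theorem stmt10 (m r : ℕ) (hm : 1 ≤ m) (hr : r ≤ m - 1) :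
    {s : ℕ | s ≤ 2 ^ m - 2 ∧ wtN m s ≤ r ∧ r + 1 ≤ wtN m (s + 1)}.ncard =
      (m - 1).choose r := by
  obtain ⟨n, rfl⟩ : ∃ n, m = n + 1 := ⟨m - 1, by omega⟩
  have hpow : 1 ≤ 2 ^ n := Nat.one_le_two_pow
  have hset : {s : ℕ | s ≤ 2 ^ (n + 1) - 2 ∧ wtN (n + 1) s ≤ r ∧ r + 1 ≤ wtN (n + 1) (s + 1)}
      = ↑(((Finset.range (2 ^ n)).filter fun t => wtN n t = r).image (fun t => 2 * t)) := by
    ext s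
    simp only [Set.mem_setOf_eq, Finset.coe_image, Set.mem_image, Finset.mem_coe,
      Finset.mem_filter, Finset.mem_range]
    constructor
    · rintro ⟨hs, hle, hge⟩
      have hle1 := (wtN_succ_le s (n + 1)).1
      have hodd := (wtN_succ_le s (n + 1)).2
      have heven : s % 2 = 0 := by
        rcases Nat.even_or_odd s with h | h
        · omega
        · have := hodd (Nat.odd_iff.mp h); omega
      obtain ⟨t, rfl⟩ : ∃ t, s = 2 * t := ⟨s / 2, by omega⟩
      refine ⟨t, ⟨?_, ?_⟩, rfl⟩
      · have : 2 ^ (n + 1) = 2 * 2 ^ n := by ring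
        omega
      · rw [wtN_two_mul] at hle
        have h2 : wtN (n + 1) (2 * t + 1) = wtN n t + 1 := wtN_two_mul_add_one n t
        omega
    · rintro ⟨t, ⟨ht, hwt⟩, rfl⟩
      refine ⟨?_, ?_, ?_⟩
      · have : 2 ^ (n + 1) = 2 * 2 ^ n := by ring
        omega
      · rw [wtN_two_mul]; omega
      · rw [wtN_two_mul_add_one]; omega
  rw [hset, Set.ncard_coe_finset, Finset.card_image_of_injective _ (by intro a b h; simp only at h; omega)]
  simpa using count_wt n r
end

section
/- Let m ≥ 1 and 0 ≤ r ≤ m−1 be integers, and let π be a Gray permutation of {0,…,2^m−1}. Then the number of integers s with 0 ≤ s ≤ 2^m − 1 such that wt_m(π(s)) ≤ r and either s = 2^m − 1 or wt_m(π(s+1)) ≥ r+1, is at most C(m, r+1) + 1, where C(m, r+1) is the binomial coefficient. -/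
lemma wt_step (m a b : ℕ)
    (h : ((Finset.range m).filter fun i => a.testBit i ≠ b.testBit i).card = 1) :
    wtN m b ≤ wtN m a + 1 := by
  have hsub : ((Finset.range m).filter fun j => b.testBit j)
      ⊆ ((Finset.range m).filter fun j => a.testBit j) ∪
        ((Finset.range m).filter fun i => a.testBit i ≠ b.testBit i) := by
    intro j hj
    simp only [Finset.mem_filter, Finset.mem_union] at *
    by_cases hab : a.testBit j = b.testBit j
    · exact Or.inl ⟨hj.1, by rw [hab]; exact hj.2⟩
    · exact Or.inr ⟨hj.1, hab⟩
  have h2 := Finset.card_union_le ((Finset.range m).filter fun j => a.testBit j)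
    ((Finset.range m).filter fun i => a.testBit i ≠ b.testBit i)
  have h1 := Finset.card_le_card hsub
  unfold wtN
  omega

lemma card_weight (m k : ℕ) : {x : Fin (2 ^ m) | wtN m (x : ℕ) = k}.ncard ≤ m.choose k := by
  classical
  set W := {x : Fin (2 ^ m) | wtN m (x : ℕ) = k} with hW
  set g : Fin (2 ^ m) → Finset ℕ := fun x => (Finset.range m).filter fun j => (x : ℕ).testBit j
    with hg
  have hinj : Set.InjOn g W := by
    intro x _ y _ hxy
    have hbit : ∀ j, (x : ℕ).testBit j = (y : ℕ).testBit j := by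
      intro j
      by_cases hj : j < m
      · have := Finset.ext_iff.mp hxy j
        simp only [hg, Finset.mem_filter, Finset.mem_range] at this
        by_cases hx : (x : ℕ).testBit j
        · have := (this.mp ⟨hj, hx⟩).2
          rw [hx, this]
        · by_cases hy : (y : ℕ).testBit j
          · exact absurd (this.mpr ⟨hj, hy⟩).2 hx
          · simp only [Bool.not_eq_true] at hx hy
            rw [hx, hy]
      · have hx : (x : ℕ).testBit j = false :=
          Nat.testBit_lt_two_pow (lt_of_lt_of_le x.isLt (Nat.pow_le_pow_right (by norm_num) (by omega)))
        have hy : (y : ℕ).testBit j = false :=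
          Nat.testBit_lt_two_pow (lt_of_lt_of_le y.isLt (Nat.pow_le_pow_right (by norm_num) (by omega)))
        rw [hx, hy]
    exact Fin.ext (Nat.eq_of_testBit_eq hbit)
  have hsub : g '' W ⊆ ↑(Finset.powersetCard k (Finset.range m)) := by
    rintro _ ⟨x, hx, rfl⟩
    rw [Finset.mem_coe, Finset.mem_powersetCard]
    exact ⟨Finset.filter_subset _ _, hx⟩
  calc W.ncard = (g '' W).ncard := (Set.ncard_image_of_injOn hinj).symm
    _ ≤ (↑(Finset.powersetCard k (Finset.range m)) : Set (Finset ℕ)).ncard :=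
        Set.ncard_le_ncard hsub (Finset.finite_toSet _)
    _ = (Finset.powersetCard k (Finset.range m)).card := Set.ncard_coe_finset _
    _ = m.choose k := by simp [Finset.card_powersetCard]

/-- For a Gray permutation π of {0,…,2^m−1} and 0 ≤ r ≤ m−1, the number of
s with wt_m(π(s)) ≤ r and (s = 2^m − 1 or wt_m(π(s+1)) ≥ r+1) is at most C(m, r+1) + 1. -/
theorem stmt12 (m r : ℕ) (hm : 1 ≤ m) (hr : r ≤ m - 1)
    (π : Equiv.Perm (Fin (2 ^ m))) (hπ : IsGray m π) :
    {s : Fin (2 ^ m) | wtN m ((π s : Fin (2 ^ m)) : ℕ) ≤ r ∧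
        ((s : ℕ) + 1 = 2 ^ m ∨
          ∃ h : (s : ℕ) + 1 < 2 ^ m,
            r + 1 ≤ wtN m ((π (⟨(s : ℕ) + 1, h⟩ : Fin (2 ^ m)) : Fin (2 ^ m)) : ℕ))}.ncard ≤
      m.choose (r + 1) + 1 := by
  classical
  have hpos : 0 < 2 ^ m := Nat.pow_pos (by norm_num)
  set S := {s : Fin (2 ^ m) | wtN m ((π s : Fin (2 ^ m)) : ℕ) ≤ r ∧
        ((s : ℕ) + 1 = 2 ^ m ∨
          ∃ h : (s : ℕ) + 1 < 2 ^ m,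
            r + 1 ≤ wtN m ((π (⟨(s : ℕ) + 1, h⟩ : Fin (2 ^ m)) : Fin (2 ^ m)) : ℕ))} with hS
  set T := {s : Fin (2 ^ m) | wtN m ((π s : Fin (2 ^ m)) : ℕ) ≤ r ∧
          ∃ h : (s : ℕ) + 1 < 2 ^ m,
            r + 1 ≤ wtN m ((π (⟨(s : ℕ) + 1, h⟩ : Fin (2 ^ m)) : Fin (2 ^ m)) : ℕ)} with hT
  have htop : 2 ^ m - 1 < 2 ^ m := Nat.sub_lt hpos one_pos
  have hsub : S ⊆ T ∪ {(⟨2 ^ m - 1, htop⟩ : Fin (2 ^ m))} := by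
    intro s hs
    rcases hs.2 with h | h
    · right
      simp only [Set.mem_singleton_iff]
      exact Fin.ext (show (s : ℕ) = 2 ^ m - 1 by omega)
    · left; exact ⟨hs.1, h⟩
  set f : Fin (2 ^ m) → Fin (2 ^ m) := fun s =>
    if h : (s : ℕ) + 1 < 2 ^ m then π ⟨(s : ℕ) + 1, h⟩ else π s with hf
  have hfinj : Set.InjOn f T := by
    intro x hx y hy hxy
    obtain ⟨-, hx1, -⟩ := hx
    obtain ⟨-, hy1, -⟩ := hy
    simp only [hf, dif_pos hx1, dif_pos hy1] at hxy
    have := π.injective hxy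
    have := Fin.val_eq_of_eq this
    exact Fin.ext (by simpa using this)
  have himg : f '' T ⊆ {x : Fin (2 ^ m) | wtN m (x : ℕ) = r + 1} := by
    rintro _ ⟨s, ⟨hwle, h1, hwge⟩, rfl⟩
    simp only [hf, dif_pos h1, Set.mem_setOf_eq]
    have hstep := wt_step m ((π s : Fin (2 ^ m)) : ℕ)
      ((π (⟨(s : ℕ) + 1, h1⟩ : Fin (2 ^ m)) : Fin (2 ^ m)) : ℕ) (hπ s h1)
    omega
  calc S.ncard ≤ (T ∪ {(⟨2 ^ m - 1, htop⟩ : Fin (2 ^ m))}).ncard :=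
        Set.ncard_le_ncard hsub (Set.toFinite _)
    _ ≤ T.ncard + ({(⟨2 ^ m - 1, htop⟩ : Fin (2 ^ m))} : Set (Fin (2 ^ m))).ncard :=
        Set.ncard_union_le _ _
    _ = T.ncard + 1 := by rw [Set.ncard_singleton]
    _ = (f '' T).ncard + 1 := by rw [Set.ncard_image_of_injOn hfinj]
    _ ≤ {x : Fin (2 ^ m) | wtN m (x : ℕ) = r + 1}.ncard + 1 :=
        add_le_add_left (Set.ncard_le_ncard himg (Set.toFinite _)) 1
    _ ≤ m.choose (r + 1) + 1 := add_le_add_left (card_weight m (r + 1)) 1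
end
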